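/- arXiv:2406.06365 — 4 statements merged into one kernel-verified Lean document; each statement's English description precedes it below -/
import Mathlib

section
/- The descent statistic and the excedance statistic are equidistributed over the symmetric group S_n: for every n ≥ 1, the sum over all permutations π of [n] of x^{des(π)} equals the sum over all permutations π of [n] of x^{exc(π)}. -/
/-- The permutation `π` of `Fin n`, extended to a function `ℕ → ℕ` (acting as the
identity outside `{0, …, n-1}`); positions are 0-indexed. -/
def permToNat {n : ℕ} (π : Equiv.Perm (Fin n)) (i : ℕ) : ℕ :=
  if h : i < n then (π ⟨i, h⟩ : ℕ) else i

/-- The number of descents of `π`: indices `i ∈ [n-1]` (here 0-indexed `i ∈ {0,…,n-2}`)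
with `π(i) > π(i+1)`. -/
def des {n : ℕ} (π : Equiv.Perm (Fin n)) : ℕ :=
  ((Finset.range (n - 1)).filter fun i => permToNat π (i + 1) < permToNat π i).card

/-- The number of excedances of `π`: indices `i` with `π(i) > i`. -/
def exc {n : ℕ} (π : Equiv.Perm (Fin n)) : ℕ :=
  ((Finset.range n).filter fun i => i < permToNat π i).card

/-- The major index of `π`: the sum of the (1-indexed) descent positions. -/
def maj {n : ℕ} (π : Equiv.Perm (Fin n)) : ℕ :=
  ∑ i ∈ (Finset.range (n - 1)).filter (fun i => permToNat π (i + 1) < permToNat π i), (i + 1)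

namespace DesExcAux
open Finset Equiv Polynomial

variable {n : ℕ}

lemma permToNat_lt {σ : Equiv.Perm (Fin n)} {i : ℕ} (h : i < n) : permToNat σ i < n := by
  simp [permToNat, h, Fin.isLt]

lemma permToNat_of_ge {σ : Equiv.Perm (Fin n)} {i : ℕ} (h : ¬ i < n) : permToNat σ i = i := by
  simp [permToNat, h]

/-- Extend a permutation of `Fin n` to `Fin (n+1)`, fixing the last element. -/
def ext (σ : Equiv.Perm (Fin n)) : Equiv.Perm (Fin (n+1)) where
  toFun i := if h : (i : ℕ) < n then (σ ⟨i, h⟩).castSucc else i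
  invFun i := if h : (i : ℕ) < n then (σ.symm ⟨i, h⟩).castSucc else i
  left_inv i := by
    by_cases h : (i : ℕ) < n
    · simp [h, Fin.isLt]
    · simp [h]
  right_inv i := by
    by_cases h : (i : ℕ) < n
    · simp [h, Fin.isLt]
    · simp [h]

lemma ext_apply (σ : Equiv.Perm (Fin n)) (i : Fin (n+1)) :
    ((ext σ i : Fin (n+1)) : ℕ) = permToNat σ i := by
  rcases lt_or_ge (i : ℕ) n with h | h
  · simp [ext, permToNat, h, Equiv.coe_fn_mk]
  · have h' : ¬ (i : ℕ) < n := not_lt.mpr h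
    simp [ext, permToNat, h', Equiv.coe_fn_mk]

lemma ext_injective : Function.Injective (ext (n := n)) := by
  intro σ τ h
  ext i
  have := congrArg (fun e : Equiv.Perm (Fin (n+1)) => ((e i.castSucc : Fin (n+1)) : ℕ)) h
  simp only [ext_apply] at this
  have hi : (i.castSucc : ℕ) < n := i.isLt
  simpa [permToNat, hi] using this

/-- The shift permutation: `i ↦ i` for `i < p`, `p ↦ n`, `i ↦ i - 1` for `i > p`. -/
def shiftIns (p : Fin (n+1)) : Equiv.Perm (Fin (n+1)) where
  toFun i := ⟨if (i : ℕ) < (p : ℕ) then i else if (i : ℕ) = (p : ℕ) then n else (i : ℕ) - 1,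
    by have := i.isLt; split_ifs <;> omega⟩
  invFun j := ⟨if (j : ℕ) < (p : ℕ) then j else if (j : ℕ) = n then p else (j : ℕ) + 1,
    by have := j.isLt; have := p.isLt; split_ifs <;> omega⟩
  left_inv i := by
    have hi := i.isLt; have hp := p.isLt
    apply Fin.ext
    simp only [Fin.val_mk]
    split_ifs <;> omega
  right_inv j := by
    have hj := j.isLt; have hp := p.isLt
    apply Fin.ext
    simp only [Fin.val_mk]
    split_ifs <;> omega

lemma shiftIns_apply (p : Fin (n+1)) (i : Fin (n+1)) :
    ((shiftIns p i : Fin (n+1)) : ℕ) =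
      if (i : ℕ) < (p : ℕ) then (i : ℕ) else if (i : ℕ) = (p : ℕ) then n else (i : ℕ) - 1 := rfl

/-- Insertion of the value `n` at position `p` in the one-line notation of `σ`. -/
def desIns (σ : Equiv.Perm (Fin n)) (p : Fin (n+1)) : Equiv.Perm (Fin (n+1)) :=
  (shiftIns p).trans (ext σ)

/-- Insertion of `n` into a cycle of `σ` right after `p` (or as fixed point if `p = n`). -/
def excIns (σ : Equiv.Perm (Fin n)) (p : Fin (n+1)) : Equiv.Perm (Fin (n+1)) :=
  (ext σ).trans (Equiv.swap (ext σ p) (Fin.last n))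

lemma permToNat_desIns (σ : Equiv.Perm (Fin n)) (p : Fin (n+1)) (i : ℕ) (hi : i < n + 1) :
    permToNat (desIns σ p) i =
      if i < (p : ℕ) then permToNat σ i
      else if i = (p : ℕ) then n
      else permToNat σ (i - 1) := by
  have hp := p.isLt
  have : permToNat (desIns σ p) i = ((desIns σ p) ⟨i, hi⟩ : ℕ) := by simp [permToNat, hi]
  rw [this]
  show ((ext σ (shiftIns p ⟨i, hi⟩) : Fin (n+1)) : ℕ) = _
  rw [ext_apply, shiftIns_apply]
  simp only [Fin.val_mk]
  split_ifs with h1 h2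
  · rfl
  · rw [permToNat_of_ge (by omega)]
  · rfl

lemma permToNat_excIns (σ : Equiv.Perm (Fin n)) (p : Fin (n+1)) (i : ℕ) (hi : i < n + 1) :
    permToNat (excIns σ p) i =
      if i < n ∧ i = (p : ℕ) then n
      else if i = n then permToNat σ p
      else permToNat σ i := by
  have hp := p.isLt
  have h0 : permToNat (excIns σ p) i = ((excIns σ p) ⟨i, hi⟩ : ℕ) := by simp [permToNat, hi]
  rw [h0]
  show ((Equiv.swap (ext σ p) (Fin.last n) (ext σ ⟨i, hi⟩) : Fin (n+1)) : ℕ) = _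
  by_cases hin : i < n
  · -- ext σ ⟨i,hi⟩ = castSucc (σ ⟨i,_⟩), value < n, not last
    by_cases hip : i = (p : ℕ)
    · have : ext σ ⟨i, hi⟩ = ext σ p := by
        congr 1; exact Fin.ext hip
      rw [this, Equiv.swap_apply_left]
      simp only [Fin.last]
      rw [if_pos ⟨hin, hip⟩]
    · have hne1 : ext σ ⟨i, hi⟩ ≠ ext σ p := by
        intro h
        exact hip (congrArg (fun x : Fin (n+1) => (x : ℕ)) ((ext σ).injective h) ▸ rfl)
      have hvl : ((ext σ ⟨i, hi⟩ : Fin (n+1)) : ℕ) < n := by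
        rw [ext_apply]; simpa using permToNat_lt (σ := σ) hin
      have hne2 : ext σ ⟨i, hi⟩ ≠ Fin.last n := by
        intro h; rw [h] at hvl; simp [Fin.last] at hvl
      rw [Equiv.swap_apply_of_ne_of_ne hne1 hne2, ext_apply]
      rw [if_neg (by tauto), if_neg (by omega)]
  · have hin' : i = n := by omega
    have : (⟨i, hi⟩ : Fin (n+1)) = Fin.last n := Fin.ext (by simpa [Fin.last] using hin')
    rw [this]
    have hlast : ext σ (Fin.last n) = Fin.last n := by
      apply Fin.ext
      rw [ext_apply, permToNat_of_ge (by simp [Fin.last])]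
    rw [hlast, Equiv.swap_apply_right, ext_apply]
    rw [if_neg (by omega), if_pos hin']

lemma permToNat_le {σ : Equiv.Perm (Fin n)} (i : ℕ) : permToNat σ i ≤ max i (n-1) := by
  rcases lt_or_ge i n with h | h
  · have := permToNat_lt (σ := σ) h; omega
  · rw [permToNat_of_ge (by omega)]; omega

lemma exc_excIns (σ : Equiv.Perm (Fin n)) (p : Fin (n+1)) :
    exc (excIns σ p) = exc σ +
      (if (p : ℕ) < n ∧ permToNat σ p ≤ (p : ℕ) then 1 else 0) := by
  classical
  have hp := p.isLt
  have hset : ((Finset.range (n+1)).filter fun i => i < permToNat (excIns σ p) i) =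
      (Finset.range n).filter (fun i => i = (p : ℕ) ∨ i < permToNat σ i) := by
    ext i
    simp only [Finset.mem_filter, Finset.mem_range]
    constructor
    · rintro ⟨hi, hlt⟩
      rw [permToNat_excIns σ p i hi] at hlt
      split_ifs at hlt with h1 h2
      · exact ⟨h1.1, Or.inl h1.2⟩
      · exfalso
        have := permToNat_le (σ := σ) (p : ℕ)
        omega
      · have hin : i < n := by
          by_contra hc
          rw [permToNat_of_ge (by omega)] at hlt; omega
        exact ⟨hin, Or.inr hlt⟩
    · rintro ⟨hi, h⟩
      refine ⟨by omega, ?_⟩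
      rw [permToNat_excIns σ p i (by omega)]
      by_cases hip : i = (p : ℕ)
      · rw [if_pos ⟨hi, hip⟩]; omega
      · rw [if_neg (by tauto), if_neg (by omega)]
        tauto
  unfold exc
  rw [hset, Finset.filter_or, Finset.filter_eq']
  by_cases hpn : (p : ℕ) < n
  · rw [if_pos (Finset.mem_range.mpr hpn)]
    by_cases hpe : (p : ℕ) < permToNat σ (p : ℕ)
    · rw [if_neg (by omega)]
      have heq : ({(p:ℕ)} : Finset ℕ) ∪ (Finset.range n).filter (fun i => i < permToNat σ i)
          = (Finset.range n).filter (fun i => i < permToNat σ i) := by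
        apply Finset.union_eq_right.mpr
        simp only [Finset.singleton_subset_iff, Finset.mem_filter, Finset.mem_range]
        exact ⟨hpn, hpe⟩
      rw [heq]; omega
    · rw [if_pos ⟨hpn, by omega⟩, ← Finset.insert_eq,
        Finset.card_insert_of_notMem (by simp only [Finset.mem_filter]; omega)]
  · rw [if_neg (by simpa using hpn), if_neg (by tauto), Finset.empty_union]
    omega

lemma des_desIns (σ : Equiv.Perm (Fin n)) (p : Fin (n+1)) :
    des (desIns σ p) = des σ +
      (if (p : ℕ) = n ∨ (1 ≤ (p : ℕ) ∧ permToNat σ (p : ℕ) < permToNat σ ((p : ℕ) - 1))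
        then 0 else 1) := by
  classical
  have hp := p.isLt
  set D := (Finset.range (n-1)).filter
    (fun i => permToNat σ (i+1) < permToNat σ i) with hD
  have hchar : ∀ i, i < n → (permToNat (desIns σ p) (i+1) < permToNat (desIns σ p) i ↔
      ((i+1 < (p : ℕ) ∧ permToNat σ (i+1) < permToNat σ i) ∨ i = (p : ℕ) ∨
        ((p : ℕ) < i ∧ permToNat σ i < permToNat σ (i-1)))) := by
    intro i hi
    rw [permToNat_desIns σ p i (by omega), permToNat_desIns σ p (i+1) (by omega)]
    by_cases h1 : i + 1 < (p : ℕ)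
    · rw [if_pos h1, if_pos (by omega)]
      constructor
      · intro h; exact Or.inl ⟨h1, h⟩
      · rintro (⟨_, h⟩ | h | ⟨h, _⟩)
        · exact h
        · omega
        · omega
    · by_cases h2 : i + 1 = (p : ℕ)
      · rw [if_neg h1, if_pos h2, if_pos (by omega)]
        have := permToNat_lt (σ := σ) hi
        constructor
        · intro h; omega
        · rintro (⟨h, _⟩ | h | ⟨h, _⟩) <;> omega
      · by_cases h3 : i = (p : ℕ)
        · rw [if_neg h1, if_neg h2, if_neg (by omega), if_pos h3,
            Nat.add_sub_cancel]
          have := permToNat_lt (σ := σ) (i := i) hi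
          constructor
          · intro _; exact Or.inr (Or.inl h3)
          · intro _; omega
        · rw [if_neg h1, if_neg h2, if_neg (by omega), if_neg h3,
            Nat.add_sub_cancel]
          constructor
          · intro h; exact Or.inr (Or.inr ⟨by omega, h⟩)
          · rintro (⟨h, _⟩ | h | ⟨_, h⟩)
            · omega
            · omega
            · exact h
  have hset : (Finset.range ((n+1)-1)).filter
      (fun i => permToNat (desIns σ p) (i+1) < permToNat (desIns σ p) i) =
      (D.filter (fun i => i+1 < (p : ℕ))) ∪
        ((D.filter (fun i => (p : ℕ) ≤ i)).image (fun i => i+1)) ∪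
        (if (p : ℕ) < n then ({(p : ℕ)} : Finset ℕ) else ∅) := by
    ext i
    simp only [Finset.mem_filter, Finset.mem_range, Finset.mem_union, Finset.mem_image, hD,
      Nat.add_sub_cancel]
    constructor
    · rintro ⟨hi, hdes⟩
      rw [hchar i hi] at hdes
      rcases hdes with ⟨h1, h2⟩ | h | ⟨h1, h2⟩
      · exact Or.inl (Or.inl ⟨⟨by omega, h2⟩, h1⟩)
      · right
        rw [if_pos (by omega)]
        simp [h]
      · refine Or.inl (Or.inr ⟨i-1, ⟨⟨by omega, ?_⟩, by omega⟩, by omega⟩)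
        rw [(by omega : i-1+1 = i)]
        exact h2
    · rintro ((⟨⟨hr, hd⟩, hlt⟩ | ⟨j, ⟨⟨hjr, hjd⟩, hjp⟩, rfl⟩) | hmem)
      · exact ⟨by omega, (hchar i (by omega)).mpr (Or.inl ⟨hlt, hd⟩)⟩
      · refine ⟨by omega, (hchar (j+1) (by omega)).mpr (Or.inr (Or.inr ⟨by omega, ?_⟩))⟩
        rw [Nat.add_sub_cancel]
        exact hjd
      · split_ifs at hmem with hpn
        · have hip : i = (p : ℕ) := Finset.mem_singleton.mp hmem
          exact ⟨by omega, (hchar i (by omega)).mpr (Or.inr (Or.inl hip))⟩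
        · simp at hmem
  have hc2 : (1 ≤ (p : ℕ) ∧ permToNat σ (p : ℕ) < permToNat σ ((p : ℕ) - 1)) →
      (p : ℕ) < n := by
    rintro ⟨h1, h2⟩
    by_contra hc
    have hpn : (p : ℕ) = n := by omega
    rw [hpn] at h2
    have ha := permToNat_of_ge (σ := σ) (i := n) (by omega)
    have hb := permToNat_le (σ := σ) (n-1)
    omega
  -- cardinalities
  have hABd : Disjoint (D.filter (fun i => i+1 < (p : ℕ)))
      ((D.filter (fun i => (p : ℕ) ≤ i)).image (fun i => i+1)) := by
    rw [Finset.disjoint_left]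
    intro a ha hb
    simp only [Finset.mem_filter, Finset.mem_image] at ha hb
    obtain ⟨j, ⟨_, hj⟩, rfl⟩ := hb
    omega
  have hCd : Disjoint ((D.filter (fun i => i+1 < (p : ℕ))) ∪
      ((D.filter (fun i => (p : ℕ) ≤ i)).image (fun i => i+1)))
      (if (p : ℕ) < n then ({(p : ℕ)} : Finset ℕ) else ∅) := by
    rw [Finset.disjoint_right]
    intro a ha hb
    split_ifs at ha with hpn
    · have : a = (p : ℕ) := Finset.mem_singleton.mp ha
      subst this
      simp only [Finset.mem_union, Finset.mem_filter, Finset.mem_image] at hb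
      rcases hb with ⟨_, h⟩ | ⟨j, ⟨_, hj⟩, hji⟩
      · omega
      · omega
    · simp at ha
  have hsplitD : (D.filter (fun i => i+1 < (p : ℕ))).card +
      ((D.filter (fun i => ¬ (i+1 < (p : ℕ)))).card) = D.card :=
    Finset.card_filter_add_card_filter_not _
  have hsplit2 : D.filter (fun i => ¬ (i+1 < (p : ℕ))) =
      (D.filter (fun i => i+1 = (p : ℕ))) ∪ (D.filter (fun i => (p : ℕ) ≤ i)) := by
    ext i
    simp only [Finset.mem_filter, Finset.mem_union]
    constructor
    · rintro ⟨hi, h⟩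
      by_cases h' : i + 1 = (p : ℕ)
      · exact Or.inl ⟨hi, h'⟩
      · exact Or.inr ⟨hi, by omega⟩
    · rintro (⟨hi, h⟩ | ⟨hi, h⟩) <;> exact ⟨hi, by omega⟩
  have hd2 : Disjoint (D.filter (fun i => i+1 = (p : ℕ)))
      (D.filter (fun i => (p : ℕ) ≤ i)) := by
    rw [Finset.disjoint_left]
    intro a ha hb
    simp only [Finset.mem_filter] at ha hb
    omega
  have hDf : (D.filter (fun i => i+1 = (p : ℕ))).card =
      if 1 ≤ (p : ℕ) ∧ permToNat σ (p : ℕ) < permToNat σ ((p : ℕ) - 1) then 1 else 0 := by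
    split_ifs with h
    · have hpn : (p : ℕ) < n := hc2 h
      have : D.filter (fun i => i+1 = (p : ℕ)) = {(p : ℕ) - 1} := by
        ext i
        simp only [hD, Finset.mem_filter, Finset.mem_range, Finset.mem_singleton]
        constructor
        · rintro ⟨_, h'⟩; omega
        · rintro rfl
          refine ⟨⟨by omega, ?_⟩, by omega⟩
          rw [(by omega : (p : ℕ) - 1 + 1 = (p : ℕ))]
          exact h.2
      rw [this, Finset.card_singleton]
    · have : D.filter (fun i => i+1 = (p : ℕ)) = ∅ := by
        ext i
        simp only [hD, Finset.mem_filter, Finset.mem_range, Finset.notMem_empty, iff_false,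
          not_and]
        rintro ⟨hir, hid⟩ hip
        apply h
        refine ⟨by omega, ?_⟩
        rw [(by omega : (p : ℕ) - 1 = i), ← hip]
        exact hid
      rw [this, Finset.card_empty]
  have himg : ((D.filter (fun i => (p : ℕ) ≤ i)).image (fun i => i+1)).card =
      (D.filter (fun i => (p : ℕ) ≤ i)).card :=
    Finset.card_image_of_injective _ (fun a b h => by omega)
  have hCc : (if (p : ℕ) < n then ({(p : ℕ)} : Finset ℕ) else ∅).card =
      if (p : ℕ) < n then 1 else 0 := by
    split_ifs <;> simp
  unfold des
  rw [hset, Finset.card_union_of_disjoint hCd, Finset.card_union_of_disjoint hABd, himg, hCc,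
    ← hD]
  rw [hsplit2] at hsplitD
  rw [Finset.card_union_of_disjoint hd2] at hsplitD
  rw [hDf] at hsplitD
  by_cases hq : (p : ℕ) = n
  · have : ¬ ((p : ℕ) < n) := by omega
    have hcf : ¬ (1 ≤ (p : ℕ) ∧ permToNat σ (p : ℕ) < permToNat σ ((p : ℕ) - 1)) := by
      intro hcontra; exact absurd (hc2 hcontra) this
    rw [if_pos (Or.inl hq)] at *
    simp only [this, if_false, hcf] at *
    omega
  · have hpn : (p : ℕ) < n := by omega
    by_cases hc : (1 ≤ (p : ℕ) ∧ permToNat σ (p : ℕ) < permToNat σ ((p : ℕ) - 1))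
    · rw [if_pos (Or.inr hc)]
      rw [if_pos hc] at hsplitD
      rw [if_pos hpn]
      omega
    · rw [if_neg hc] at hsplitD
      rw [if_pos hpn]
      rw [if_neg (fun h => hc (h.resolve_left hq))]
      omega

lemma ext_last (σ : Equiv.Perm (Fin n)) : ext σ (Fin.last n) = Fin.last n := by
  apply Fin.ext
  rw [ext_apply, permToNat_of_ge (by simp [Fin.last])]

lemma desIns_apply_self (σ : Equiv.Perm (Fin n)) (p : Fin (n+1)) :
    desIns σ p p = Fin.last n := by
  apply Fin.ext
  have h1 : ((desIns σ p p : Fin (n+1)) : ℕ) = permToNat (desIns σ p) (p : ℕ) := by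
    simp [permToNat, p.isLt]
  rw [h1, permToNat_desIns σ p (p : ℕ) p.isLt, if_neg (by omega), if_pos rfl]
  simp [Fin.last]

lemma desIns_injective :
    Function.Injective (fun q : Equiv.Perm (Fin n) × Fin (n+1) => desIns q.1 q.2) := by
  rintro ⟨σ₁, p₁⟩ ⟨σ₂, p₂⟩ h
  simp only at h
  have hp : p₁ = p₂ := by
    apply (desIns σ₁ p₁).injective
    rw [desIns_apply_self, h, desIns_apply_self]
  subst hp
  have h2 : ext σ₁ = ext σ₂ := by
    have : (shiftIns p₁).symm.trans ((shiftIns p₁).trans (ext σ₁)) =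
        (shiftIns p₁).symm.trans ((shiftIns p₁).trans (ext σ₂)) := by
      rw [show (shiftIns p₁).trans (ext σ₁) = desIns σ₁ p₁ from rfl, h]; rfl
    simpa [← Equiv.trans_assoc] using this
  rw [Prod.mk.injEq]
  exact ⟨ext_injective h2, rfl⟩

lemma excIns_apply_self (σ : Equiv.Perm (Fin n)) (p : Fin (n+1)) :
    excIns σ p p = Fin.last n := by
  show Equiv.swap (ext σ p) (Fin.last n) (ext σ p) = Fin.last n
  exact Equiv.swap_apply_left _ _

lemma excIns_apply_last (σ : Equiv.Perm (Fin n)) (p : Fin (n+1)) :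
    excIns σ p (Fin.last n) = ext σ p := by
  show Equiv.swap (ext σ p) (Fin.last n) (ext σ (Fin.last n)) = ext σ p
  rw [ext_last, Equiv.swap_apply_right]

lemma excIns_injective :
    Function.Injective (fun q : Equiv.Perm (Fin n) × Fin (n+1) => excIns q.1 q.2) := by
  rintro ⟨σ₁, p₁⟩ ⟨σ₂, p₂⟩ h
  simp only at h
  have hp : p₁ = p₂ := by
    apply (excIns σ₁ p₁).injective
    rw [excIns_apply_self, h, excIns_apply_self]
  subst hp
  have he : ext σ₁ p₁ = ext σ₂ p₁ := by
    rw [← excIns_apply_last σ₁ p₁, h, excIns_apply_last]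
  have h2 : ext σ₁ = ext σ₂ := by
    have : ((ext σ₁).trans (Equiv.swap (ext σ₁ p₁) (Fin.last n))).trans
        (Equiv.swap (ext σ₁ p₁) (Fin.last n)).symm =
        ((ext σ₂).trans (Equiv.swap (ext σ₂ p₁) (Fin.last n))).trans
        (Equiv.swap (ext σ₂ p₁) (Fin.last n)).symm := by
      rw [show (ext σ₁).trans (Equiv.swap (ext σ₁ p₁) (Fin.last n)) = excIns σ₁ p₁ from rfl, h,
        he]
      rfl
    simpa [Equiv.trans_assoc] using this
  rw [Prod.mk.injEq]
  exact ⟨ext_injective h2, rfl⟩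

lemma ins_bijective (f : Equiv.Perm (Fin n) × Fin (n+1) → Equiv.Perm (Fin (n+1)))
    (hf : Function.Injective f) : Function.Bijective f := by
  rw [Fintype.bijective_iff_injective_and_card]
  refine ⟨hf, ?_⟩
  rw [Fintype.card_prod, Fintype.card_perm, Fintype.card_perm, Fintype.card_fin,
    Fintype.card_fin, Nat.factorial_succ, mul_comm]

lemma exc_le (σ : Equiv.Perm (Fin n)) : exc σ ≤ n := by
  calc exc σ ≤ (Finset.range n).card := Finset.card_filter_le _ _
    _ = n := Finset.card_range n

lemma des_le (σ : Equiv.Perm (Fin n)) : des σ ≤ n - 1 := by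
  calc des σ ≤ (Finset.range (n-1)).card := Finset.card_filter_le _ _
    _ = n - 1 := Finset.card_range _

lemma card_fin_filter (P : ℕ → Prop) [DecidablePred P] :
    (Finset.univ.filter fun p : Fin (n+1) => P (p : ℕ)).card =
      ((Finset.range (n+1)).filter P).card := by
  rw [Finset.card_filter, Finset.card_filter]
  exact Fin.sum_univ_eq_sum_range (fun i => if P i then 1 else 0) (n+1)

lemma count_des (σ : Equiv.Perm (Fin n)) :
    (Finset.univ.filter fun p : Fin (n+1) =>
      (p : ℕ) = n ∨ (1 ≤ (p : ℕ) ∧ permToNat σ (p : ℕ) < permToNat σ ((p : ℕ) - 1))).card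
      = 1 + des σ := by
  classical
  rw [card_fin_filter (fun j => j = n ∨ (1 ≤ j ∧ permToNat σ j < permToNat σ (j - 1)))]
  have hset : (Finset.range (n+1)).filter
      (fun j => j = n ∨ (1 ≤ j ∧ permToNat σ j < permToNat σ (j - 1))) =
      insert n (((Finset.range (n-1)).filter
        (fun i => permToNat σ (i+1) < permToNat σ i)).image (fun i => i + 1)) := by
    ext j
    simp only [Finset.mem_filter, Finset.mem_range, Finset.mem_insert, Finset.mem_image]
    constructor
    · rintro ⟨hj, hj2 | ⟨hj2, hj3⟩⟩
      · exact Or.inl hj2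
      · right
        have hjn : j < n := by
          by_contra hc
          have hje : j = n := by omega
          have ha := permToNat_of_ge (σ := σ) (i := j) (by omega)
          have hb := permToNat_le (σ := σ) (j-1)
          omega
        refine ⟨j - 1, ⟨⟨by omega, ?_⟩, by omega⟩⟩
        rw [(by omega : j - 1 + 1 = j)]
        exact hj3
    · rintro (rfl | ⟨i, hi, rfl⟩)
      · exact ⟨by omega, Or.inl rfl⟩
      · refine ⟨by omega, Or.inr ⟨by omega, ?_⟩⟩
        rw [Nat.add_sub_cancel]
        exact hi.2
  rw [hset, Finset.card_insert_of_notMem, Finset.card_image_of_injective _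
    (fun a b h => by omega)]
  · unfold des; omega
  · simp only [Finset.mem_image, Finset.mem_filter, Finset.mem_range, not_exists]
    rintro i ⟨⟨hi, _⟩, hc⟩
    omega

lemma count_exc (σ : Equiv.Perm (Fin n)) :
    (Finset.univ.filter fun p : Fin (n+1) =>
      ¬ ((p : ℕ) < n ∧ permToNat σ (p : ℕ) ≤ (p : ℕ))).card = 1 + exc σ := by
  classical
  rw [card_fin_filter (fun j => ¬ (j < n ∧ permToNat σ j ≤ j))]
  have hset : (Finset.range (n+1)).filter (fun j => ¬ (j < n ∧ permToNat σ j ≤ j)) =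
      insert n ((Finset.range n).filter (fun i => i < permToNat σ i)) := by
    ext j
    simp only [Finset.mem_filter, Finset.mem_range, Finset.mem_insert, not_and, not_le]
    constructor
    · rintro ⟨hj, hj2⟩
      by_cases hjn : j = n
      · exact Or.inl hjn
      · exact Or.inr ⟨by omega, hj2 (by omega)⟩
    · rintro (rfl | ⟨hj, hj2⟩)
      · exact ⟨by omega, fun hc => absurd hc (by omega)⟩
      · exact ⟨by omega, fun _ => hj2⟩
  rw [hset, Finset.card_insert_of_notMem (by simp)]
  unfold exc; omega

open Polynomial in
lemma inner_des (σ : Equiv.Perm (Fin n)) :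
    ∑ p : Fin (n+1), (X : Polynomial ℤ) ^ des (desIns σ p) =
      (1 + des σ) • (X : Polynomial ℤ) ^ des σ + (n - des σ) • (X : Polynomial ℤ) ^ (des σ + 1) := by
  classical
  have hterm : ∀ p : Fin (n+1), (X : Polynomial ℤ) ^ des (desIns σ p) =
      if (p : ℕ) = n ∨ (1 ≤ (p : ℕ) ∧ permToNat σ (p : ℕ) < permToNat σ ((p : ℕ) - 1))
        then (X : Polynomial ℤ) ^ des σ else (X : Polynomial ℤ) ^ (des σ + 1) := by
    intro p
    rw [des_desIns σ p]
    split_ifs <;> ring_nf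
  rw [Finset.sum_congr rfl (fun p _ => hterm p), Finset.sum_ite, Finset.sum_const,
    Finset.sum_const, count_des]
  congr 1
  have h1 : (Finset.univ.filter fun p : Fin (n+1) =>
      ¬ ((p : ℕ) = n ∨ (1 ≤ (p : ℕ) ∧ permToNat σ (p : ℕ) < permToNat σ ((p : ℕ) - 1)))).card
      = n - des σ := by
    have := Finset.card_filter_add_card_filter_not (s := (Finset.univ : Finset (Fin (n+1))))
      (p := fun p : Fin (n+1) =>
        (p : ℕ) = n ∨ (1 ≤ (p : ℕ) ∧ permToNat σ (p : ℕ) < permToNat σ ((p : ℕ) - 1)))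
    rw [count_des] at this
    have hcard : (Finset.univ : Finset (Fin (n+1))).card = n + 1 := by
      rw [Finset.card_univ, Fintype.card_fin]
    have hle := des_le σ
    omega
  rw [h1]

open Polynomial in
lemma inner_exc (σ : Equiv.Perm (Fin n)) :
    ∑ p : Fin (n+1), (X : Polynomial ℤ) ^ exc (excIns σ p) =
      (1 + exc σ) • (X : Polynomial ℤ) ^ exc σ + (n - exc σ) • (X : Polynomial ℤ) ^ (exc σ + 1) := by
  classical
  have hterm : ∀ p : Fin (n+1), (X : Polynomial ℤ) ^ exc (excIns σ p) =
      if ¬ ((p : ℕ) < n ∧ permToNat σ (p : ℕ) ≤ (p : ℕ))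
        then (X : Polynomial ℤ) ^ exc σ else (X : Polynomial ℤ) ^ (exc σ + 1) := by
    intro p
    rw [exc_excIns σ p]
    split_ifs <;> ring_nf
  rw [Finset.sum_congr rfl (fun p _ => hterm p), Finset.sum_ite, Finset.sum_const,
    Finset.sum_const, count_exc]
  congr 1
  have h1 : (Finset.univ.filter fun p : Fin (n+1) =>
      ¬ ¬ ((p : ℕ) < n ∧ permToNat σ (p : ℕ) ≤ (p : ℕ))).card = n - exc σ := by
    have := Finset.card_filter_add_card_filter_not (s := (Finset.univ : Finset (Fin (n+1))))
      (p := fun p : Fin (n+1) => ¬ ((p : ℕ) < n ∧ permToNat σ (p : ℕ) ≤ (p : ℕ)))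
    rw [count_exc] at this
    have hcard : (Finset.univ : Finset (Fin (n+1))).card = n + 1 := by
      rw [Finset.card_univ, Fintype.card_fin]
    have hle := exc_le σ
    omega
  rw [h1]

open Polynomial in
lemma fiber_card
    (h : ∑ σ : Equiv.Perm (Fin n), (X : Polynomial ℤ) ^ des σ =
      ∑ σ : Equiv.Perm (Fin n), (X : Polynomial ℤ) ^ exc σ) (k : ℕ) :
    (Finset.univ.filter fun σ : Equiv.Perm (Fin n) => des σ = k).card =
      (Finset.univ.filter fun σ : Equiv.Perm (Fin n) => exc σ = k).card := by
  classical
  have h' := congrArg (fun q : Polynomial ℤ => q.coeff k) h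
  simp only [Polynomial.finset_sum_coeff, Polynomial.coeff_X_pow] at h'
  rw [Finset.sum_boole, Finset.sum_boole] at h'
  have h'' := Nat.cast_inj (R := ℤ) |>.mp h'
  have e1 : (Finset.univ.filter fun σ : Equiv.Perm (Fin n) => k = des σ) =
      (Finset.univ.filter fun σ : Equiv.Perm (Fin n) => des σ = k) := by
    apply Finset.filter_congr
    intro x _
    constructor <;> (intro hh; omega)
  have e2 : (Finset.univ.filter fun σ : Equiv.Perm (Fin n) => k = exc σ) =
      (Finset.univ.filter fun σ : Equiv.Perm (Fin n) => exc σ = k) := by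
    apply Finset.filter_congr
    intro x _
    constructor <;> (intro hh; omega)
  rw [e1, e2] at h''
  exact h''

lemma transfer
    (h : ∀ k, (Finset.univ.filter fun σ : Equiv.Perm (Fin n) => des σ = k).card =
      (Finset.univ.filter fun σ : Equiv.Perm (Fin n) => exc σ = k).card)
    (g : ℕ → Polynomial ℤ) :
    ∑ σ : Equiv.Perm (Fin n), g (des σ) = ∑ σ : Equiv.Perm (Fin n), g (exc σ) := by
  classical
  have hd : ∀ σ ∈ (Finset.univ : Finset (Equiv.Perm (Fin n))), des σ ∈ Finset.range (n+1) :=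
    fun σ _ => Finset.mem_range.mpr (by have := des_le σ; omega)
  have he : ∀ σ ∈ (Finset.univ : Finset (Equiv.Perm (Fin n))), exc σ ∈ Finset.range (n+1) :=
    fun σ _ => Finset.mem_range.mpr (by have := exc_le σ; omega)
  rw [← Finset.sum_fiberwise_of_maps_to hd (fun σ => g (des σ)),
    ← Finset.sum_fiberwise_of_maps_to he (fun σ => g (exc σ))]
  refine Finset.sum_congr rfl (fun k _ => ?_)
  have e1 : ∑ σ ∈ Finset.univ.filter (fun σ : Equiv.Perm (Fin n) => des σ = k), g (des σ) =
      (Finset.univ.filter (fun σ : Equiv.Perm (Fin n) => des σ = k)).card • g k := by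
    rw [← Finset.sum_const]
    exact Finset.sum_congr rfl (fun σ hσ => by rw [(Finset.mem_filter.mp hσ).2])
  have e2 : ∑ σ ∈ Finset.univ.filter (fun σ : Equiv.Perm (Fin n) => exc σ = k), g (exc σ) =
      (Finset.univ.filter (fun σ : Equiv.Perm (Fin n) => exc σ = k)).card • g k := by
    rw [← Finset.sum_const]
    exact Finset.sum_congr rfl (fun σ hσ => by rw [(Finset.mem_filter.mp hσ).2])
  rw [e1, e2, h k]

open Polynomial in
lemma step_des :
    ∑ σ : Equiv.Perm (Fin (n+1)), (X : Polynomial ℤ) ^ des σ =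
      ∑ σ' : Equiv.Perm (Fin n),
        ((1 + des σ') • (X : Polynomial ℤ) ^ des σ' +
          (n - des σ') • (X : Polynomial ℤ) ^ (des σ' + 1)) := by
  rw [← Fintype.sum_bijective _ (ins_bijective _ desIns_injective)
    (fun q : Equiv.Perm (Fin n) × Fin (n+1) => (X : Polynomial ℤ) ^ des (desIns q.1 q.2))
    (fun σ => (X : Polynomial ℤ) ^ des σ) (fun q => rfl)]
  rw [Fintype.sum_prod_type]
  exact Finset.sum_congr rfl (fun σ' _ => inner_des σ')

open Polynomial in
lemma step_exc :
    ∑ σ : Equiv.Perm (Fin (n+1)), (X : Polynomial ℤ) ^ exc σ =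
      ∑ σ' : Equiv.Perm (Fin n),
        ((1 + exc σ') • (X : Polynomial ℤ) ^ exc σ' +
          (n - exc σ') • (X : Polynomial ℤ) ^ (exc σ' + 1)) := by
  rw [← Fintype.sum_bijective _ (ins_bijective _ excIns_injective)
    (fun q : Equiv.Perm (Fin n) × Fin (n+1) => (X : Polynomial ℤ) ^ exc (excIns q.1 q.2))
    (fun σ => (X : Polynomial ℤ) ^ exc σ) (fun q => rfl)]
  rw [Fintype.sum_prod_type]
  exact Finset.sum_congr rfl (fun σ' _ => inner_exc σ')

open Polynomial in
lemma main : ∀ m : ℕ, ∑ σ : Equiv.Perm (Fin m), (X : Polynomial ℤ) ^ des σ =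
    ∑ σ : Equiv.Perm (Fin m), (X : Polynomial ℤ) ^ exc σ := by
  intro m
  induction m with
  | zero =>
    refine Finset.sum_congr rfl (fun σ _ => ?_)
    have h1 : des σ = 0 := by simp [des]
    have h2 : exc σ = 0 := by simp [exc]
    rw [h1, h2]
  | succ m ih =>
    rw [step_des, step_exc]
    exact transfer (fiber_card ih)
      (fun k => (1 + k) • (X : Polynomial ℤ) ^ k + (m - k) • (X : Polynomial ℤ) ^ (k + 1))

end DesExcAux

/-- The descent and excedance statistics are equidistributed over the symmetric group. -/
theorem des_exc_equidistributed (n : ℕ) (hn : 1 ≤ n) :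
    ∑ π : Equiv.Perm (Fin n), (Polynomial.X : Polynomial ℤ) ^ des π =
      ∑ π : Equiv.Perm (Fin n), (Polynomial.X : Polynomial ℤ) ^ exc π :=
  DesExcAux.main n
end

section
/- For every polynomial f of degree n, there is a unique decomposition f(x) = a(x) + x·b(x) where a and b are symmetric polynomials centered appropriately; explicitly a(x) = (f(x) − x^{n+1} f(1/x))/(1 − x) and b(x) = (x^n f(1/x) − f(x))/(1 − x), where a satisfies x^n a(1/x) = a(x) and b satisfies x^{n-1} b(1/x) = b(x). -/
open Polynomial

private lemma reflect_reflect' (N : ℕ) (f : Polynomial ℚ) : reflect N (reflect N f) = f := by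
  ext i
  rw [coeff_reflect, coeff_reflect, revAt_invol]

private lemma natDegree_reflect_le' {N : ℕ} {f : Polynomial ℚ} (h : f.natDegree ≤ N) :
    (reflect N f).natDegree ≤ N := by
  apply natDegree_le_iff_coeff_eq_zero.mpr
  intro i hi
  rw [coeff_reflect, revAt_eq_self_of_lt hi]
  exact coeff_eq_zero_of_natDegree_lt (lt_of_le_of_lt h hi)

private lemma eval_one_reflect' {N : ℕ} {f : Polynomial ℚ} (h : f.natDegree ≤ N) :
    (reflect N f).eval 1 = f.eval 1 := by
  rw [eval_eq_sum_range' (Nat.lt_succ_of_le (natDegree_reflect_le' h)),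
      eval_eq_sum_range' (Nat.lt_succ_of_le h)]
  simp only [one_pow, mul_one, coeff_reflect]
  rw [← Finset.sum_range_reflect (fun i => f.coeff i) (N + 1)]
  refine Finset.sum_congr rfl fun i hi => ?_
  rw [Finset.mem_range] at hi
  rw [revAt_le (by omega)]
  congr 1

private lemma one_sub_X_ne : (1 - X : Polynomial ℚ) ≠ 0 := by
  intro h
  apply X_sub_C_ne_zero (1:ℚ)
  rw [map_one]
  linear_combination -h

private lemma reflect_one_sub_X : reflect 1 (1 - X : Polynomial ℚ) = X - 1 := by
  rw [reflect_sub, reflect_one, reflect_one_X, pow_one]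

/-- Every polynomial `f` of degree `n` has a unique decomposition `f = a + X * b` with
`a` symmetric of center `n/2` and `b` symmetric of center `(n-1)/2`; explicitly
`a = (f - X^{n+1} f(1/X))/(1-X)` and `b = (X^n f(1/X) - f)/(1-X)`, where
`X^{n+1} f(1/X) = X * reflect n f` and `X^n f(1/X) = reflect n f`. -/
theorem symmetric_decomposition (n : ℕ) (f : Polynomial ℚ) (hf0 : f ≠ 0)
    (hf : f.natDegree = n) :
    (∃! p : Polynomial ℚ × Polynomial ℚ,
      f = p.1 + X * p.2 ∧ p.1.natDegree ≤ n ∧ p.2.natDegree ≤ n - 1 ∧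
        reflect n p.1 = p.1 ∧ reflect (n - 1) p.2 = p.2) ∧
    (∀ a b : Polynomial ℚ,
      f = a + X * b → a.natDegree ≤ n → b.natDegree ≤ n - 1 →
      reflect n a = a → reflect (n - 1) b = b →
      (1 - X) * a = f - X * reflect n f ∧ (1 - X) * b = reflect n f - f) := by
  obtain _ | m := n
  · -- n = 0 : f is a nonzero constant
    have hC : f = C (f.coeff 0) := (eq_C_of_natDegree_eq_zero hf)
    have hrefl : reflect 0 f = f := by
      conv_lhs => rw [hC]
      rw [reflect_C, pow_zero, mul_one, ← hC]
    have hb0 : ∀ a b : Polynomial ℚ, f = a + X * b → a.natDegree ≤ 0 → b.natDegree ≤ 0 →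
        b = 0 ∧ a = f := by
      intro a b hab had hbd
      have hb : b = C (b.coeff 0) := eq_C_of_natDegree_eq_zero (Nat.le_zero.mp hbd)
      have ha1 : a.coeff 1 = 0 := coeff_eq_zero_of_natDegree_lt (by omega)
      have h1 : f.coeff 1 = b.coeff 0 := by
        rw [hab, coeff_add, coeff_X_mul, ha1, zero_add]
      have h1' : f.coeff 1 = 0 := coeff_eq_zero_of_natDegree_lt (by omega)
      have hbz : b = 0 := by rw [hb, ← h1, h1', map_zero]
      refine ⟨hbz, ?_⟩
      rw [hab, hbz]; ring
    constructor
    · refine ⟨(f, 0), ⟨by simp, by simp [hf], by simp, hrefl, reflect_zero⟩, ?_⟩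
      rintro ⟨a, b⟩ ⟨hab, had, hbd, has, hbs⟩
      obtain ⟨hbz, haz⟩ := hb0 a b hab had hbd
      simp [hbz, haz]
    · intro a b hab had hbd has hbs
      obtain ⟨hbz, haz⟩ := hb0 a b hab had hbd
      subst hbz haz
      rw [hrefl]
      constructor <;> ring
  · -- n = m + 1
    set n := m + 1 with hn
    have hfn : f.natDegree ≤ n := le_of_eq hf
    have hroot : IsRoot (reflect n f - f) 1 := by
      simp [IsRoot, eval_one_reflect' hfn]
    obtain ⟨q, hq⟩ := (dvd_iff_isRoot.mpr hroot)
    have hq' : (1 - X) * (-q) = reflect n f - f := by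
      rw [hq, map_one]; ring
    set b : Polynomial ℚ := -q with hbdef
    -- degree of b
    have hgdeg : (reflect n f - f).natDegree ≤ n :=
      le_trans (natDegree_sub_le _ _) (max_le (natDegree_reflect_le' hfn) hfn)
    have hbdeg : b.natDegree ≤ m := by
      by_cases hbz : b = 0
      · simp [hbz]
      · have h1 : (1 - X : Polynomial ℚ).natDegree = 1 := by
          have : (1 - X : Polynomial ℚ) = -(X - C 1) := by rw [map_one]; ring
          rw [this, natDegree_neg, natDegree_X_sub_C]
        have := natDegree_mul one_sub_X_ne hbz (p := (1 - X : Polynomial ℚ)) (q := b)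
        rw [hq', h1] at this
        omega
    -- symmetry of b
    have hbsym : reflect m b = b := by
      have h1 : reflect (1 + m) ((1 - X) * b) = (X - 1) * reflect m b := by
        rw [reflect_mul _ _ (by
          calc (1 - X : Polynomial ℚ).natDegree ≤ max (1:Polynomial ℚ).natDegree (X : Polynomial ℚ).natDegree := natDegree_sub_le _ _
          _ ≤ 1 := max_le (by simp) natDegree_X_le) hbdeg, reflect_one_sub_X]
      have h2 : reflect n (reflect n f - f) = -(reflect n f - f) := by
        rw [reflect_sub, reflect_reflect' n f]; ring
      have h3 : (X - 1) * reflect m b = (X - 1) * b := by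
        rw [← h1]
        have : (1 + m) = n := by omega
        rw [this, hq', h2, ← hq']
        ring
      have hX1 : (X - 1 : Polynomial ℚ) ≠ 0 := by
        intro h; apply one_sub_X_ne; rw [← neg_eq_zero]; rw [← h]; ring
      exact mul_left_cancel₀ hX1 h3
    -- the key computation for any valid pair
    have key : ∀ a b' : Polynomial ℚ, f = a + X * b' → a.natDegree ≤ n → b'.natDegree ≤ m →
        reflect n a = a → reflect m b' = b' → reflect n f = a + b' := by
      intro a b' hab had hbd has hbs
      have hXb : reflect (1 + m) (X * b') = b' := by
        rw [reflect_mul _ _ natDegree_X_le hbd, reflect_one_X, one_mul, hbs]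
      have : (1 + m) = n := by omega
      rw [this] at hXb
      rw [hab, reflect_add, has, hXb]
    -- formulas for any valid pair
    have formulas : ∀ a b' : Polynomial ℚ,
        f = a + X * b' → a.natDegree ≤ n → b'.natDegree ≤ m →
        reflect n a = a → reflect m b' = b' →
        (1 - X) * a = f - X * reflect n f ∧ (1 - X) * b' = reflect n f - f := by
      intro a b' hab had hbd has hbs
      have hk := key a b' hab had hbd has hbs
      constructor
      · rw [hk, hab]; ring
      · rw [hk, hab]; ring
    -- build the pair
    set a : Polynomial ℚ := f - X * b with hadef
    have hab : f = a + X * b := by rw [hadef]; ring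
    have hadeg : a.natDegree ≤ n := by
      refine le_trans (natDegree_sub_le _ _) (max_le hfn ?_)
      refine le_trans (natDegree_mul_le) ?_
      have := natDegree_X_le (R := ℚ)
      omega
    have hasym : reflect n a = a := by
      have hXb : reflect (1 + m) (X * b) = b := by
        rw [reflect_mul _ _ natDegree_X_le hbdeg, reflect_one_X, one_mul, hbsym]
      have h1m : (1 + m) = n := by omega
      rw [h1m] at hXb
      rw [hadef, reflect_sub, hXb]
      have : reflect n f - b = f - X * b ↔ reflect n f - f = b - X * b := by
        constructor <;> intro h <;> linear_combination h
      rw [this, ← hq']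
      ring
    refine ⟨⟨(a, b), ⟨hab, hadeg, hbdeg, hasym, hbsym⟩, ?_⟩, ?_⟩
    · rintro ⟨a', b'⟩ ⟨hab', had', hbd', has', hbs'⟩
      have h2 := (formulas a' b' hab' had' hbd' has' hbs').2
      rw [← hq'] at h2
      have hbb : b' = b := mul_left_cancel₀ one_sub_X_ne h2
      have haa : a' = a := by
        have : a' + X * b' = a + X * b := by rw [← hab', ← hab]
        rw [hbb] at this
        linear_combination this
      simp [haa, hbb]
    · exact formulas
end

section
/- Let f(x) = Σ_{i=0}^n f_i x^i have nonnegative coefficients with symmetric decomposition f(x) = a(x) + x b(x), where deg a = n and deg b = n−1 and a, b have nonnegative coefficients. Then f is alternatingly increasing (i.e., f_0 ≤ f_n ≤ f_1 ≤ f_{n-1} ≤ ... ≤ f_{⌊(n+1)/2⌋}) if and only if both a and b are unimodal. -/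
open Polynomial

/-- A polynomial is unimodal (as a coefficient sequence of length `m+1`). -/
def Unimodal (f : Polynomial ℝ) (m : ℕ) : Prop :=
  ∃ j, j ≤ m ∧ (∀ i, i < j → f.coeff i ≤ f.coeff (i + 1)) ∧
    ∀ i, j ≤ i → i < m → f.coeff (i + 1) ≤ f.coeff i

/-- A polynomial of degree `n` is alternatingly increasing:
`f_0 ≤ f_n ≤ f_1 ≤ f_{n-1} ≤ ⋯ ≤ f_{⌊(n+1)/2⌋}`. -/
def AlternatinglyIncreasing (f : Polynomial ℝ) (n : ℕ) : Prop :=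
  (∀ i, 2 * i ≤ n → f.coeff i ≤ f.coeff (n - i)) ∧
    ∀ i, 2 * i + 1 < n → f.coeff (n - i) ≤ f.coeff (i + 1)

/-- A symmetric coefficient sequence is unimodal iff it is nondecreasing
on the first half. -/
lemma symm_unimodal_iff (c : Polynomial ℝ) (m : ℕ)
    (hsym : ∀ i, i ≤ m → c.coeff (m - i) = c.coeff i) :
    Unimodal c m ↔ ∀ i, 2 * i < m → c.coeff i ≤ c.coeff (i + 1) := by
  constructor
  · rintro ⟨j, hj, hinc, hdec⟩ i hi
    rcases lt_or_ge i j with h | h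
    · exact hinc i h
    · have h1 : c.coeff (m - i) = c.coeff i := hsym i (by omega)
      have h2 : c.coeff (m - (i + 1)) = c.coeff (i + 1) := hsym (i + 1) (by omega)
      have h4 := hdec (m - (i + 1)) (by omega) (by omega)
      rw [show m - (i + 1) + 1 = m - i by omega] at h4
      linarith
  · intro H
    refine ⟨(m + 1) / 2, by omega, fun i hi => H i (by omega), fun i h1 h2 => ?_⟩
    have e1 : c.coeff (m - i) = c.coeff i := hsym i (by omega)
    have e2 : c.coeff (m - (i + 1)) = c.coeff (i + 1) := hsym (i + 1) (by omega)
    have h4 := H (m - (i + 1)) (by omega)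
    rw [show m - (i + 1) + 1 = m - i by omega] at h4
    linarith

/-- Beck–Jochemko–McCullough: if `f = a + X b` is the symmetric decomposition of `f`,
with `deg a = n`, `deg b = n - 1` and nonnegative coefficients, then `f` is
alternatingly increasing iff `a` and `b` are both unimodal. -/
theorem alternatingly_increasing_iff_unimodal (n : ℕ) (hn : 1 ≤ n)
    (f a b : Polynomial ℝ)
    (hdecomp : f = a + X * b)
    (hadeg : a.natDegree = n) (hbdeg : b.natDegree = n - 1)
    (hasym : reflect n a = a) (hbsym : reflect (n - 1) b = b)
    (hfpos : ∀ i, 0 ≤ f.coeff i) (hapos : ∀ i, 0 ≤ a.coeff i)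
    (hbpos : ∀ i, 0 ≤ b.coeff i) :
    AlternatinglyIncreasing f n ↔ Unimodal a n ∧ Unimodal b (n - 1) := by
  have hA : ∀ i, i ≤ n → a.coeff (n - i) = a.coeff i := by
    intro i hi
    have h : (reflect n a).coeff i = a.coeff (n - i) := by
      rw [coeff_reflect, revAt_le hi]
    rw [hasym] at h
    exact h.symm
  have hB : ∀ i, i ≤ n - 1 → b.coeff (n - 1 - i) = b.coeff i := by
    intro i hi
    have h : (reflect (n - 1) b).coeff i = b.coeff (n - 1 - i) := by
      rw [coeff_reflect, revAt_le hi]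
    rw [hbsym] at h
    exact h.symm
  have hfS : ∀ i, f.coeff (i + 1) = a.coeff (i + 1) + b.coeff i := by
    intro i
    rw [hdecomp, coeff_add, coeff_X_mul]
  have hf0 : f.coeff 0 = a.coeff 0 := by
    rw [hdecomp, coeff_add]
    simp
  rw [symm_unimodal_iff a n hA, symm_unimodal_iff b (n - 1) hB]
  unfold AlternatinglyIncreasing
  constructor
  · rintro ⟨h1, h2⟩
    constructor
    · intro i hi
      rcases eq_or_lt_of_le (show 2 * i + 1 ≤ n from hi) with heq | hlt
      · have h := hA i (by omega)
        rw [show n - i = i + 1 by omega] at h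
        linarith
      · have hb := h2 i hlt
        rw [show n - i = (n - i - 1) + 1 by omega, hfS, hfS] at hb
        have ea : a.coeff (n - i - 1 + 1) = a.coeff i := by
          have h := hA i (by omega)
          rw [show n - i = n - i - 1 + 1 by omega] at h
          exact h
        have eb : b.coeff (n - i - 1) = b.coeff i := by
          have h := hB i (by omega)
          rw [show n - 1 - i = n - i - 1 by omega] at h
          exact h
        linarith
    · intro i hi
      have hb := h1 (i + 1) (by omega)
      rw [show n - (i + 1) = (n - i - 2) + 1 by omega, hfS, hfS] at hb
      have ea : a.coeff (n - i - 2 + 1) = a.coeff (i + 1) := by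
        have h := hA (i + 1) (by omega)
        rw [show n - (i + 1) = n - i - 2 + 1 by omega] at h
        exact h
      have eb : b.coeff (n - i - 2) = b.coeff (i + 1) := by
        have h := hB (i + 1) (by omega)
        rw [show n - 1 - (i + 1) = n - i - 2 by omega] at h
        exact h
      linarith
  · rintro ⟨HA, HB⟩
    constructor
    · intro i hi
      cases i with
      | zero =>
        rw [hf0, show n - 0 = (n - 1) + 1 by omega, hfS]
        have ea : a.coeff (n - 1 + 1) = a.coeff 0 := by
          have h := hA 0 (by omega)
          rw [show n - 0 = n - 1 + 1 by omega] at h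
          exact h
        have := hbpos (n - 1)
        linarith
      | succ k =>
        rw [hfS, show n - (k + 1) = (n - k - 2) + 1 by omega, hfS]
        have ea : a.coeff (n - k - 2 + 1) = a.coeff (k + 1) := by
          have h := hA (k + 1) (by omega)
          rw [show n - (k + 1) = n - k - 2 + 1 by omega] at h
          exact h
        have eb : b.coeff (n - k - 2) = b.coeff (k + 1) := by
          have h := hB (k + 1) (by omega)
          rw [show n - 1 - (k + 1) = n - k - 2 by omega] at h
          exact h
        have := HB k (by omega)
        linarith
    · intro i hi
      rw [show n - i = (n - i - 1) + 1 by omega, hfS, hfS]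
      have ea : a.coeff (n - i - 1 + 1) = a.coeff i := by
        have h := hA i (by omega)
        rw [show n - i = n - i - 1 + 1 by omega] at h
        exact h
      have eb : b.coeff (n - i - 1) = b.coeff i := by
        have h := hB i (by omega)
        rw [show n - 1 - i = n - i - 1 by omega] at h
        exact h
      have := HA i (by omega)
      linarith
end

section
/- For 1 ≤ k ≤ n−1, the number of permutations π of [n] with exactly one descent and exactly k excedances equals the binomial coefficient C(n, k+1). -/
open Finset

namespace SplitAux

variable {n : ℕ}

/-- gap lemma for strictly monotone maps into Fin n -/
lemma strictMono_gap {m : ℕ} {f : Fin m → Fin n} (hf : StrictMono f) :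
    ∀ d : ℕ, ∀ i j : Fin m, (j : ℕ) = (i : ℕ) + d → (f i : ℕ) + d ≤ (f j : ℕ) := by
  intro d
  induction d with
  | zero => intro i j h; have : i = j := Fin.ext (by omega); simp [this]
  | succ d ih =>
    intro i j h
    have hj' : (i : ℕ) + d < m := by have := j.2; omega
    have h1 := ih i ⟨(i : ℕ) + d, hj'⟩ rfl
    have h2 : f ⟨(i : ℕ) + d, hj'⟩ < f j := hf (by simp [Fin.lt_def]; omega)
    have := Fin.lt_def.1 h2
    omega

lemma le_apply {m : ℕ} {f : Fin m → Fin n} (hf : StrictMono f) (i : Fin m) :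
    (i : ℕ) ≤ (f i : ℕ) := by
  have h0 : 0 < m := by have := i.2; omega
  have := strictMono_gap hf (i : ℕ) ⟨0, h0⟩ i (by simp)
  omega

lemma apply_le {m : ℕ} {f : Fin m → Fin n} (hf : StrictMono f) (i : Fin m) :
    (f i : ℕ) ≤ n - m + (i : ℕ) := by
  have hm : m - 1 < m := by have := i.2; omega
  have h1 := strictMono_gap hf (m - 1 - (i : ℕ)) i ⟨m - 1, hm⟩ (by simp; have := i.2; omega)
  have h2 : (f ⟨m - 1, hm⟩ : ℕ) < n := (f _).2
  have := i.2
  omega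

/-- the permutation determined by a subset `S`: increasing enumeration of `S` on the
first `S.card` positions, then increasing enumeration of the complement. -/
noncomputable def splitFun (S : Finset (Fin n)) (i : Fin n) : Fin n :=
  if h : (i : ℕ) < S.card then S.orderEmbOfFin rfl ⟨i, h⟩
  else Sᶜ.orderEmbOfFin (by rw [card_compl, Fintype.card_fin])
    ⟨(i : ℕ) - S.card, by have h2 := i.2; have h3 := S.card_le_univ; simp at h3; omega⟩

lemma splitFun_injective (S : Finset (Fin n)) : Function.Injective (splitFun S) := by
  intro i j hij
  unfold splitFun at hij
  by_cases hi : (i : ℕ) < S.card <;> by_cases hj : (j : ℕ) < S.card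
  · rw [dif_pos hi, dif_pos hj] at hij
    have := (S.orderEmbOfFin rfl).injective hij
    exact Fin.ext (by simpa [Fin.ext_iff] using this)
  · rw [dif_pos hi, dif_neg hj] at hij
    have h1 : S.orderEmbOfFin rfl ⟨i, hi⟩ ∈ S := orderEmbOfFin_mem _ _ _
    have h2 := orderEmbOfFin_mem Sᶜ (by rw [card_compl, Fintype.card_fin] : Sᶜ.card = n - S.card)
      ⟨(j : ℕ) - S.card, by have := j.2; have h3 := S.card_le_univ; simp at h3; omega⟩
    rw [← hij] at h2
    simp [Finset.mem_compl] at h2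

  · rw [dif_neg hi, dif_pos hj] at hij
    have h1 : S.orderEmbOfFin rfl ⟨j, hj⟩ ∈ S := orderEmbOfFin_mem _ _ _
    have h2 := orderEmbOfFin_mem Sᶜ (by rw [card_compl, Fintype.card_fin] : Sᶜ.card = n - S.card)
      ⟨(i : ℕ) - S.card, by have := i.2; have h3 := S.card_le_univ; simp at h3; omega⟩
    rw [hij] at h2
    simp [Finset.mem_compl] at h2

  · rw [dif_neg hi, dif_neg hj] at hij
    have := (Sᶜ.orderEmbOfFin (by rw [card_compl, Fintype.card_fin] :
      Sᶜ.card = n - S.card)).injective hij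
    have := Fin.ext_iff.1 this
    simp at this
    exact Fin.ext (by omega)

noncomputable def splitPerm (S : Finset (Fin n)) : Equiv.Perm (Fin n) :=
  Equiv.ofBijective (splitFun S) (Finite.injective_iff_bijective.1 (splitFun_injective S))

lemma splitPerm_apply_lt (S : Finset (Fin n)) (i : Fin n) (h : (i : ℕ) < S.card) :
    splitPerm S i = S.orderEmbOfFin rfl ⟨i, h⟩ := by
  simp [splitPerm, Equiv.ofBijective, splitFun, dif_pos h]

lemma splitPerm_apply_ge (S : Finset (Fin n)) (i : Fin n) (h : ¬ (i : ℕ) < S.card) :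
    splitPerm S i = Sᶜ.orderEmbOfFin (by rw [card_compl, Fintype.card_fin])
      ⟨(i : ℕ) - S.card, by have h2 := i.2; have h3 := S.card_le_univ; simp at h3; omega⟩ := by
  simp [splitPerm, Equiv.ofBijective, splitFun, dif_neg h]


def lowSet (W : Finset (Fin n)) : Finset (Fin n) := univ.filter fun x => ∀ w ∈ W, x < w
def VofW (W : Finset (Fin n)) : Finset (Fin n) := W.filter fun w => ∃ u ∈ W, u < w
def SofW (W : Finset (Fin n)) : Finset (Fin n) := VofW W ∪ lowSet W

lemma mem_lowSet {W : Finset (Fin n)} (hWne : W.Nonempty) {x : Fin n} :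
    x ∈ lowSet W ↔ x < W.min' hWne := by
  simp [lowSet, Finset.lt_min'_iff]

lemma mem_VofW {W : Finset (Fin n)} (hWne : W.Nonempty) {x : Fin n} :
    x ∈ VofW W ↔ x ∈ W ∧ W.min' hWne < x := by
  simp only [VofW, mem_filter, and_congr_right_iff]
  intro hx
  constructor
  · rintro ⟨u, hu, hux⟩; exact lt_of_le_of_lt (W.min'_le u hu) hux
  · intro h; exact ⟨_, W.min'_mem hWne, h⟩

lemma lowSet_eq {W : Finset (Fin n)} (hWne : W.Nonempty) :
    lowSet W = Finset.Iio (W.min' hWne) := by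
  ext x; simp [mem_lowSet hWne]

lemma VofW_eq {W : Finset (Fin n)} (hWne : W.Nonempty) :
    VofW W = W.erase (W.min' hWne) := by
  ext x
  simp only [mem_VofW hWne, mem_erase]
  constructor
  · rintro ⟨hx, hlt⟩; exact ⟨ne_of_gt hlt, hx⟩
  · rintro ⟨hne, hx⟩; exact ⟨hx, lt_of_le_of_ne (W.min'_le x hx) (Ne.symm hne)⟩

lemma mem_SofW {W : Finset (Fin n)} (hWne : W.Nonempty) {x : Fin n} :
    x ∈ SofW W ↔ (x < W.min' hWne ∨ (x ∈ W ∧ W.min' hWne < x)) := by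
  simp [SofW, mem_lowSet hWne, mem_VofW hWne, or_comm]

lemma card_SofW {k : ℕ} {W : Finset (Fin n)} (hWne : W.Nonempty) (hW : W.card = k + 1) :
    (SofW W).card = (W.min' hWne : ℕ) + k := by
  have hdisj : Disjoint (VofW W) (lowSet W) := by
    rw [Finset.disjoint_left]
    intro x hx hx'
    rw [mem_VofW hWne] at hx
    rw [mem_lowSet hWne] at hx'
    exact absurd hx.2 (not_lt.2 (le_of_lt hx'))
  rw [SofW, card_union_of_disjoint hdisj, VofW_eq hWne, lowSet_eq hWne,
    card_erase_of_mem (W.min'_mem hWne), Fin.card_Iio, hW]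
  omega

lemma minW_add_k_le {k : ℕ} {W : Finset (Fin n)} (hWne : W.Nonempty) (hW : W.card = k + 1) :
    (W.min' hWne : ℕ) + k ≤ n - 1 := by
  have hsub : W ⊆ Finset.Icc (W.min' hWne) (W.max' hWne) := fun x hx =>
    Finset.mem_Icc.2 ⟨W.min'_le x hx, W.le_max' x hx⟩
  have hcard := Finset.card_le_card hsub
  rw [Fin.card_Icc, hW] at hcard
  have h2 : (W.max' hWne : ℕ) < n := (W.max' hWne).2
  omega



lemma t_notMem_SofW {W : Finset (Fin n)} (hWne : W.Nonempty) : (W.min' hWne) ∉ SofW W := by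
  rw [mem_SofW hWne]
  simp

lemma emb_low {W : Finset (Fin n)} (hWne : W.Nonempty) :
    ∀ m : ℕ, m < (W.min' hWne : ℕ) →
      ∀ (hmc : m < (SofW W).card), ((SofW W).orderEmbOfFin rfl ⟨m, hmc⟩ : ℕ) = m := by
  intro m
  induction m using Nat.strong_induction_on with
  | _ m ih =>
  intro hm hmc
  have hmn : m < n := lt_trans hm (W.min' hWne).2
  have hge : m ≤ ((SofW W).orderEmbOfFin rfl ⟨m, hmc⟩ : ℕ) :=
    le_apply ((SofW W).orderEmbOfFin rfl).strictMono ⟨m, hmc⟩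
  have hmem : (⟨m, hmn⟩ : Fin n) ∈ SofW W :=
    (mem_SofW hWne).2 (Or.inl (by rw [Fin.lt_def]; exact hm))
  have hrange : (⟨m, hmn⟩ : Fin n) ∈ Set.range ((SofW W).orderEmbOfFin rfl) := by
    rw [range_orderEmbOfFin]; exact hmem
  obtain ⟨j, hj⟩ := hrange
  rcases lt_trichotomy (j : ℕ) m with hlt | heq | hgt
  · have h1 := ih j hlt (lt_trans hlt hm) j.2
    have hjj : (⟨(j : ℕ), j.2⟩ : Fin (SofW W).card) = j := Fin.ext rfl
    rw [hjj, hj] at h1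
    simp at h1
    omega
  · have hjm : (⟨m, hmc⟩ : Fin (SofW W).card) = j := Fin.ext heq.symm
    rw [hjm, hj]
  · have hlt2 : ((SofW W).orderEmbOfFin rfl) ⟨m, hmc⟩ < ((SofW W).orderEmbOfFin rfl) j :=
      ((SofW W).orderEmbOfFin rfl).strictMono (by rw [Fin.lt_def]; exact hgt)
    rw [hj] at hlt2
    rw [Fin.lt_def] at hlt2
    simp at hlt2
    omega

lemma emb_mid {W : Finset (Fin n)} (hWne : W.Nonempty) :
    ∀ m : ℕ, (W.min' hWne : ℕ) ≤ m →
      ∀ (hmc : m < (SofW W).card), m < ((SofW W).orderEmbOfFin rfl ⟨m, hmc⟩ : ℕ) := by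
  intro m hm hmc
  set t := (W.min' hWne : ℕ) with hT
  have htc : t < (SofW W).card := lt_of_le_of_lt hm hmc
  have h1 : t ≤ ((SofW W).orderEmbOfFin rfl ⟨t, htc⟩ : ℕ) :=
    le_apply ((SofW W).orderEmbOfFin rfl).strictMono ⟨t, htc⟩
  have h2 : ((SofW W).orderEmbOfFin rfl ⟨t, htc⟩ : ℕ) ≠ t := by
    intro hEq
    have hmem := orderEmbOfFin_mem (SofW W) rfl ⟨t, htc⟩
    have : (SofW W).orderEmbOfFin rfl ⟨t, htc⟩ = W.min' hWne := Fin.ext hEq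
    rw [this] at hmem
    exact t_notMem_SofW hWne hmem
  have h3 := strictMono_gap ((SofW W).orderEmbOfFin rfl).strictMono (m - t)
    ⟨t, htc⟩ ⟨m, hmc⟩ (by simp; omega)
  omega

lemma splitPerm_SofW_at_card {W : Finset (Fin n)} (hWne : W.Nonempty) (i : Fin n)
    (hi : (i : ℕ) = (SofW W).card) : splitPerm (SofW W) i = W.min' hWne := by
  have hcompl : ((SofW W)ᶜ).card = n - (SofW W).card := by rw [card_compl, Fintype.card_fin]
  have hz : 0 < n - (SofW W).card := by have := i.2; omega
  rw [splitPerm_apply_ge (SofW W) i (by omega)]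
  suffices h : ∀ j : Fin (n - (SofW W).card), (j : ℕ) = 0 →
      ((SofW W)ᶜ.orderEmbOfFin hcompl) j = W.min' hWne by
    exact h _ (by simp; omega)
  intro j hj
  have hj0 : j = ⟨0, hz⟩ := Fin.ext hj
  rw [hj0, Finset.orderEmbOfFin_zero hcompl hz]
  apply le_antisymm
  · apply Finset.min'_le
    rw [Finset.mem_compl]
    exact t_notMem_SofW hWne
  · apply Finset.le_min'
    intro y hy
    by_contra hlt
    push_neg at hlt
    have : y ∈ SofW W := (mem_SofW hWne).2 (Or.inl hlt)
    rw [Finset.mem_compl] at hy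
    exact hy this

lemma splitPerm_SofW_high {W : Finset (Fin n)} (i : Fin n)
    (hi : (SofW W).card ≤ (i : ℕ)) : ((splitPerm (SofW W)) i : ℕ) ≤ (i : ℕ) := by
  rw [splitPerm_apply_ge (SofW W) i (by omega)]
  generalize_proofs p1 p2
  have h := apply_le (((SofW W)ᶜ).orderEmbOfFin p1).strictMono ⟨(i : ℕ) - (SofW W).card, p2⟩
  simp only [Fin.val_mk] at h ⊢
  have h3 := (SofW W).card_le_univ
  simp at h3
  have h4 := i.2
  omega


lemma permToNat_eq (π : Equiv.Perm (Fin n)) (m : ℕ) (h : m < n) :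
    permToNat π m = (π ⟨m, h⟩ : ℕ) := dif_pos h

lemma splitPerm_mono_lt (S : Finset (Fin n)) {i j : Fin n} (hij : (i : ℕ) < (j : ℕ))
    (hj : (j : ℕ) < S.card) : (splitPerm S i : ℕ) < (splitPerm S j : ℕ) := by
  rw [splitPerm_apply_lt S i (by omega), splitPerm_apply_lt S j hj]
  exact Fin.lt_def.1 ((S.orderEmbOfFin rfl).strictMono
    (show (⟨(i : ℕ), by omega⟩ : Fin S.card) < ⟨(j : ℕ), hj⟩ from by
      rw [Fin.lt_def]; exact hij))

lemma splitPerm_mono_ge (S : Finset (Fin n)) {i j : Fin n} (hi : S.card ≤ (i : ℕ))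
    (hij : (i : ℕ) < (j : ℕ)) : (splitPerm S i : ℕ) < (splitPerm S j : ℕ) := by
  rw [splitPerm_apply_ge S i (by omega), splitPerm_apply_ge S j (by omega)]
  generalize_proofs p1 p2 p3
  refine Fin.lt_def.1 ((Sᶜ.orderEmbOfFin p1).strictMono ?_)
  rw [Fin.lt_def]
  simp only [Fin.val_mk]
  omega

section Wlemmas

variable {k : ℕ} {W : Finset (Fin n)}

lemma sigma_low (hWne : W.Nonempty) (hW : W.card = k + 1) {m : ℕ}
    (hm : m < (W.min' hWne : ℕ)) (hmn : m < n) :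
    ((splitPerm (SofW W)) ⟨m, hmn⟩ : ℕ) = m := by
  have hcard := card_SofW hWne hW
  rw [splitPerm_apply_lt (SofW W) ⟨m, hmn⟩ (by simp only [Fin.val_mk]; omega)]
  exact emb_low hWne m hm _

lemma sigma_mid (hWne : W.Nonempty) (hW : W.card = k + 1) {m : ℕ}
    (hm : (W.min' hWne : ℕ) ≤ m) (hmk : m < (W.min' hWne : ℕ) + k) (hmn : m < n) :
    m < ((splitPerm (SofW W)) ⟨m, hmn⟩ : ℕ) := by
  have hcard := card_SofW hWne hW
  rw [splitPerm_apply_lt (SofW W) ⟨m, hmn⟩ (by simp only [Fin.val_mk]; omega)]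
  exact emb_mid hWne m hm _

lemma exc_key (hWne : W.Nonempty) (hW : W.card = k + 1) (hk : 1 ≤ k) (m : ℕ) (hm : m < n) :
    (m < permToNat (splitPerm (SofW W)) m ↔
      ((W.min' hWne : ℕ) ≤ m ∧ m < (W.min' hWne : ℕ) + k)) := by
  have hcard := card_SofW hWne hW
  rw [permToNat_eq _ m hm]
  rcases lt_trichotomy m (W.min' hWne : ℕ) with h | h | h
  · rw [sigma_low hWne hW h hm]
    omega
  · constructor
    · intro _; omega
    · intro _; exact sigma_mid hWne hW (le_of_eq h.symm) (by omega) hm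
  · by_cases h2 : m < (W.min' hWne : ℕ) + k
    · constructor
      · intro _; omega
      · intro _; exact sigma_mid hWne hW (by omega) h2 hm
    · have := splitPerm_SofW_high (W := W) ⟨m, hm⟩ (by simp only [Fin.val_mk]; omega)
      simp only [Fin.val_mk] at this
      omega

lemma exc_splitPerm_SofW (hWne : W.Nonempty) (hW : W.card = k + 1) (hk : 1 ≤ k) :
    exc (splitPerm (SofW W)) = k := by
  have hle := minW_add_k_le hWne hW
  have hn2 : 2 ≤ n := by omega
  unfold exc
  have : (Finset.range n).filter (fun m => m < permToNat (splitPerm (SofW W)) m) =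
      Finset.Ico (W.min' hWne : ℕ) ((W.min' hWne : ℕ) + k) := by
    ext m
    simp only [Finset.mem_filter, Finset.mem_range, Finset.mem_Ico]
    constructor
    · rintro ⟨hmn, hlt⟩
      exact (exc_key hWne hW hk m hmn).1 hlt
    · intro hm
      have hmn : m < n := by omega
      exact ⟨hmn, (exc_key hWne hW hk m hmn).2 hm⟩
  rw [this, Nat.card_Ico]
  omega

lemma des_key (hWne : W.Nonempty) (hW : W.card = k + 1) (hk : 1 ≤ k) (i : ℕ) (hi : i < n - 1) :
    (permToNat (splitPerm (SofW W)) (i + 1) < permToNat (splitPerm (SofW W)) i ↔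
      i = (W.min' hWne : ℕ) + k - 1) := by
  have hcard := card_SofW hWne hW
  have hle := minW_add_k_le hWne hW
  set t := (W.min' hWne : ℕ) with ht
  have hin : i < n := by omega
  have hi1n : i + 1 < n := by omega
  rw [permToNat_eq _ i hin, permToNat_eq _ (i+1) hi1n]
  rcases lt_trichotomy i (t + k - 1) with h | h | h
  · have hmono := splitPerm_mono_lt (SofW W) (i := ⟨i, hin⟩) (j := ⟨i+1, hi1n⟩)
      (by simp) (by simp only [Fin.val_mk]; omega)
    constructor
    · intro hcon; omega
    · intro hcon; omega
  · have hc : i + 1 = (SofW W).card := by omega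
    have h1 := splitPerm_SofW_at_card hWne ⟨i+1, hi1n⟩ (by simp only [Fin.val_mk]; omega)
    have h2 : i < ((splitPerm (SofW W)) ⟨i, hin⟩ : ℕ) :=
      sigma_mid hWne hW (by omega) (by omega) hin
    rw [h1]
    constructor
    · intro _; omega
    · intro _
      rw [← ht]
      omega
  · have hmono := splitPerm_mono_ge (SofW W) (i := ⟨i, hin⟩) (j := ⟨i+1, hi1n⟩)
      (by simp only [Fin.val_mk]; omega) (by simp)
    constructor
    · intro hcon; omega
    · intro hcon; omega

lemma des_splitPerm_SofW (hWne : W.Nonempty) (hW : W.card = k + 1) (hk : 1 ≤ k) :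
    des (splitPerm (SofW W)) = 1 := by
  have hle := minW_add_k_le hWne hW
  unfold des
  have : (Finset.range (n-1)).filter
      (fun i => permToNat (splitPerm (SofW W)) (i+1) < permToNat (splitPerm (SofW W)) i) =
      {(W.min' hWne : ℕ) + k - 1} := by
    ext i
    simp only [Finset.mem_filter, Finset.mem_range, Finset.mem_singleton]
    constructor
    · rintro ⟨hi, hdes⟩
      exact (des_key hWne hW hk i hi).1 hdes
    · intro hi
      have hin : i < n - 1 := by omega
      exact ⟨hin, (des_key hWne hW hk i hin).2 hi⟩
  rw [this, Finset.card_singleton]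

end Wlemmas


/-- the set associated to a permutation: excedance values together with the
minimal non-fixed point. -/
def Phi (π : Equiv.Perm (Fin n)) : Finset (Fin n) :=
  (univ.filter fun v => π.symm v < v) ∪
    (univ.filter fun v => π v ≠ v ∧ ∀ u, π u ≠ u → v ≤ u)

section Wlemmas
variable {k : ℕ} {W : Finset (Fin n)}

lemma fin_exc_iff (hWne : W.Nonempty) (hW : W.card = k + 1) (hk : 1 ≤ k) (i : Fin n) :
    ((i : ℕ) < ((splitPerm (SofW W)) i : ℕ) ↔
      (W.min' hWne : ℕ) ≤ (i : ℕ) ∧ (i : ℕ) < (W.min' hWne : ℕ) + k) := by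
  have h := exc_key hWne hW hk i i.2
  rwa [permToNat_eq _ _ i.2, Fin.eta] at h

lemma moved_ge (hWne : W.Nonempty) (hW : W.card = k + 1) (u : Fin n)
    (hu : splitPerm (SofW W) u ≠ u) : (W.min' hWne : ℕ) ≤ (u : ℕ) := by
  by_contra h
  push_neg at h
  have := sigma_low hWne hW h u.2
  rw [Fin.eta] at this
  exact hu (Fin.ext this)

lemma min_moved (hWne : W.Nonempty) (hW : W.card = k + 1) (hk : 1 ≤ k) :
    splitPerm (SofW W) (W.min' hWne) ≠ W.min' hWne := by
  have h := sigma_mid hWne hW (le_refl _) (by omega) (W.min' hWne).2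
  rw [Fin.eta] at h
  intro hcon
  rw [hcon] at h
  omega

lemma Phi_left (hWne : W.Nonempty) (hW : W.card = k + 1) (hk : 1 ≤ k) :
    (univ.filter fun v => (splitPerm (SofW W)).symm v < v) = VofW W := by
  have hcard := card_SofW hWne hW
  ext v
  simp only [mem_filter, mem_univ, true_and]
  constructor
  · intro h
    set i := (splitPerm (SofW W)).symm v with hi
    have hsi : splitPerm (SofW W) i = v := Equiv.apply_symm_apply _ _
    have hexc : (i : ℕ) < ((splitPerm (SofW W)) i : ℕ) := Fin.lt_def.1 (by rw [hsi]; exact h)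
    have hrange := (fin_exc_iff hWne hW hk i).1 hexc
    have hvS : v ∈ SofW W := by
      rw [← hsi, splitPerm_apply_lt (SofW W) i (by omega)]
      exact orderEmbOfFin_mem _ _ _
    have hvt : (W.min' hWne : ℕ) < (v : ℕ) := by
      rw [← hsi]; omega
    rcases (mem_SofW hWne).1 hvS with hlow | hV
    · rw [Fin.lt_def] at hlow; omega
    · exact (mem_VofW hWne).2 hV
  · intro hv
    have hvS : v ∈ SofW W := by rw [SofW, mem_union]; exact Or.inl hv
    have hrange : v ∈ Set.range ((SofW W).orderEmbOfFin rfl) := by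
      rw [range_orderEmbOfFin]; exact hvS
    obtain ⟨j, hj⟩ := hrange
    have hjn : (j : ℕ) < n := lt_of_lt_of_le j.2 (by have := (SofW W).card_le_univ; simpa using this)
    have hsij : splitPerm (SofW W) ⟨(j : ℕ), hjn⟩ = v := by
      rw [splitPerm_apply_lt (SofW W) ⟨(j : ℕ), hjn⟩ (by simp only [Fin.val_mk]; exact j.2)]
      rw [← hj]
    have hjt : (W.min' hWne : ℕ) ≤ (j : ℕ) := by
      by_contra hcon
      push_neg at hcon
      have := sigma_low hWne hW hcon hjn
      rw [hsij] at this
      have hv2 := ((mem_VofW hWne).1 hv).2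
      rw [Fin.lt_def] at hv2
      omega
    have hmid := sigma_mid hWne hW hjt (by omega) hjn
    rw [hsij] at hmid
    have : (splitPerm (SofW W)).symm v = ⟨(j : ℕ), hjn⟩ := by
      rw [← hsij, Equiv.symm_apply_apply]
    rw [this, Fin.lt_def]
    exact hmid

lemma Phi_right (hWne : W.Nonempty) (hW : W.card = k + 1) (hk : 1 ≤ k) :
    (univ.filter fun v => splitPerm (SofW W) v ≠ v ∧
      ∀ u, splitPerm (SofW W) u ≠ u → v ≤ u) = {W.min' hWne} := by
  ext v
  simp only [mem_filter, mem_univ, true_and, mem_singleton]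
  constructor
  · rintro ⟨hmv, hmin⟩
    have h1 : v ≤ W.min' hWne := hmin _ (min_moved hWne hW hk)
    have h2 : (W.min' hWne : ℕ) ≤ (v : ℕ) := moved_ge hWne hW v hmv
    exact le_antisymm h1 (by rw [Fin.le_def]; exact h2)
  · rintro rfl
    exact ⟨min_moved hWne hW hk, fun u hu => by rw [Fin.le_def]; exact moved_ge hWne hW u hu⟩

lemma Phi_splitPerm_SofW (hWne : W.Nonempty) (hW : W.card = k + 1) (hk : 1 ≤ k) :
    Phi (splitPerm (SofW W)) = W := by
  rw [Phi, Phi_left hWne hW hk, Phi_right hWne hW hk]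
  ext w
  simp only [mem_union, mem_singleton, mem_VofW hWne]
  constructor
  · rintro (⟨hw, _⟩ | rfl)
    · exact hw
    · exact W.min'_mem hWne
  · intro hw
    rcases eq_or_lt_of_le (W.min'_le w hw) with h | h
    · exact Or.inr h.symm
    · exact Or.inl ⟨hw, h⟩

end Wlemmas


section Classify
variable {π : Equiv.Perm (Fin n)} {D : ℕ}

def desSet (π : Equiv.Perm (Fin n)) : Finset ℕ :=
  (Finset.range (n - 1)).filter fun i => permToNat π (i + 1) < permToNat π i

lemma desSet_iff (hfil : desSet π = {D}) {i : ℕ} (hi : i < n - 1) :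
    permToNat π (i + 1) < permToNat π i ↔ i = D := by
  have : i ∈ desSet π ↔ i ∈ ({D} : Finset ℕ) := by rw [hfil]
  simpa [desSet, hi] using this

lemma D_lt (hfil : desSet π = {D}) : D < n - 1 := by
  have : D ∈ desSet π := by rw [hfil]; exact Finset.mem_singleton_self D
  simp only [desSet, Finset.mem_filter, Finset.mem_range] at this
  exact this.1

lemma step_mono (hfil : desSet π = {D}) {i : ℕ} (hi : i < n - 1) (hne : i ≠ D) :
    permToNat π i < permToNat π (i + 1) := by
  have h1 : ¬ permToNat π (i + 1) < permToNat π i := fun h => hne ((desSet_iff hfil hi).1 h)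
  have h2 : permToNat π i ≠ permToNat π (i + 1) := by
    rw [permToNat_eq π i (by omega), permToNat_eq π (i+1) (by omega)]
    intro h
    have := π.injective (Fin.ext h : π ⟨i, by omega⟩ = π ⟨i+1, by omega⟩)
    simp [Fin.ext_iff] at this
  omega

lemma run_mono_aux (hfil : desSet π = {D}) :
    ∀ d : ℕ, ∀ i : ℕ, i + d + 1 < n → (D < i ∨ i + d + 1 ≤ D) →
      permToNat π i < permToNat π (i + d + 1) := by
  intro d
  induction d with
  | zero =>
    intro i h hrun
    exact step_mono hfil (by omega) (by omega)
  | succ d ih =>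
    intro i h hrun
    have h1 : permToNat π i < permToNat π (i + d + 1) := ih i (by omega) (by omega)
    have h2 : permToNat π (i + d + 1) < permToNat π (i + d + 2) :=
      step_mono hfil (by omega) (by omega)
    have hg : i + (d + 1) + 1 = i + d + 2 := by omega
    rw [hg]
    omega

lemma run_mono (hfil : desSet π = {D}) {i j : ℕ} (hij : i < j) (hj : j < n)
    (hrun : D < i ∨ j ≤ D) : permToNat π i < permToNat π j := by
  have := run_mono_aux hfil (j - i - 1) i (by omega) (by omega)
  rw [show i + (j - i - 1) + 1 = j by omega] at this
  exact this

lemma high_le_aux (hfil : desSet π = {D}) :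
    ∀ d : ℕ, ∀ i : ℕ, i + d = n - 1 → D < i → permToNat π i ≤ i := by
  intro d
  induction d with
  | zero =>
    intro i h hD
    have hD2 := D_lt hfil
    have hn : i < n := by omega
    rw [permToNat_eq π i hn]
    have := (π ⟨i, hn⟩).2
    omega
  | succ d ih =>
    intro i h hD
    have h1 : permToNat π i < permToNat π (i + 1) := step_mono hfil (by omega) (by omega)
    have h2 : permToNat π (i + 1) ≤ i + 1 := ih (i + 1) (by omega) (by omega)
    omega

lemma high_le (hfil : desSet π = {D}) {i : ℕ} (hD : D < i) (hi : i < n) :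
    permToNat π i ≤ i := by
  have hD2 := D_lt hfil
  exact high_le_aux hfil (n - 1 - i) i (by omega) hD

lemma gap_run (hfil : desSet π = {D}) :
    ∀ d : ℕ, ∀ i : ℕ, i + d ≤ D → permToNat π i + d ≤ permToNat π (i + d) := by
  intro d
  induction d with
  | zero => intro i _; simp
  | succ d ih =>
    intro i h
    have hD2 := D_lt hfil
    have h1 := ih i (by omega)
    have h2 : permToNat π (i + d) < permToNat π (i + d + 1) :=
      step_mono hfil (by omega) (by omega)
    have hg : i + (d + 1) = i + d + 1 := by omega
    rw [hg]
    omega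

lemma fix_below (hfil : desSet π = {D}) {j : ℕ} (hj : j ≤ D) (hpj : permToNat π j ≤ j) :
    ∀ i, i ≤ j → permToNat π i = i := by
  intro i hi
  have hD2 := D_lt hfil
  have h1 := gap_run hfil (j - i) i (by omega)
  rw [show i + (j - i) = j by omega] at h1
  have h2 := gap_run hfil i 0 (by omega)
  rw [show (0 + i) = i by omega] at h2
  have h3 : 0 ≤ permToNat π 0 := Nat.zero_le _
  omega

end Classify


section Classify2
variable {π : Equiv.Perm (Fin n)} {D k : ℕ}

lemma excSet_subset (hfil : desSet π = {D}) :
    ((Finset.range n).filter fun i => i < permToNat π i) ⊆ Finset.Icc 0 D := by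
  intro i hi
  simp only [Finset.mem_filter, Finset.mem_range] at hi
  simp only [Finset.mem_Icc]
  refine ⟨Nat.zero_le _, ?_⟩
  by_contra h
  push_neg at h
  have := high_le hfil h hi.1
  omega

lemma k_le_D (hfil : desSet π = {D}) (hexc : exc π = k) : k ≤ D + 1 := by
  have h := Finset.card_le_card (excSet_subset hfil)
  rw [Nat.card_Icc] at h
  unfold exc at hexc
  omega

lemma exc_iff_mid (hfil : desSet π = {D}) (hexc : exc π = k) {i : ℕ} (hi : i < n) :
    (i < permToNat π i ↔ (D + 1 - k ≤ i ∧ i ≤ D)) := by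
  have hD2 := D_lt hfil
  have hkD := k_le_D hfil hexc
  constructor
  · intro hlt
    have hiD : i ≤ D := by
      by_contra h
      push_neg at h
      have := high_le hfil h hi
      omega
    refine ⟨?_, hiD⟩
    by_contra h
    push_neg at h
    have hsub : Finset.Icc i D ⊆ (Finset.range n).filter fun m => m < permToNat π m := by
      intro m hm
      simp only [Finset.mem_Icc] at hm
      simp only [Finset.mem_filter, Finset.mem_range]
      refine ⟨by omega, ?_⟩
      by_contra hm2
      push_neg at hm2
      have := fix_below hfil hm.2 hm2 i hm.1
      omega
    have hcard := Finset.card_le_card hsub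
    rw [Nat.card_Icc] at hcard
    unfold exc at hexc
    omega
  · rintro ⟨h1, h2⟩
    by_contra hm2
    push_neg at hm2
    have hfix := fix_below hfil h2 hm2
    have hsub : ((Finset.range n).filter fun m => m < permToNat π m) ⊆
        Finset.Icc (i + 1) D := by
      intro m hm
      simp only [Finset.mem_filter, Finset.mem_range] at hm
      have hmem : m ∈ (Finset.range n).filter fun m => m < permToNat π m := by
        simp only [Finset.mem_filter, Finset.mem_range]; exact hm
      have hmD : m ≤ D := by
        have := excSet_subset hfil hmem
        simpa [Finset.mem_Icc] using this
      simp only [Finset.mem_Icc]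
      refine ⟨?_, hmD⟩
      by_contra h3
      push_neg at h3
      have := hfix m (by omega)
      omega
    have hcard := Finset.card_le_card hsub
    rw [Nat.card_Icc] at hcard
    unfold exc at hexc
    omega

lemma low_fix (hfil : desSet π = {D}) (hexc : exc π = k) {i : ℕ} (hi : i < D + 1 - k) :
    permToNat π i = i := by
  have hD2 := D_lt hfil
  have hkD := k_le_D hfil hexc
  have ht : D + 1 - k - 1 ≤ D := by omega
  have hne : ¬ (D + 1 - k - 1 < permToNat π (D + 1 - k - 1)) := by
    rw [exc_iff_mid hfil hexc (by omega)]
    omega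
  push_neg at hne
  exact fix_below hfil ht hne i (by omega)

lemma pD1_eq (hfil : desSet π = {D}) (hexc : exc π = k) (hk : 1 ≤ k) :
    permToNat π (D + 1) = D + 1 - k := by
  have hD2 := D_lt hfil
  have hkD := k_le_D hfil hexc
  set t := D + 1 - k with hT
  have htn : t < n := by omega
  have hD1n : D + 1 < n := by omega
  apply le_antisymm
  · -- permToNat π (D+1) ≤ t
    obtain ⟨i₀f, hi₀f⟩ : ∃ j : Fin n, π j = ⟨t, htn⟩ :=
      ⟨π.symm ⟨t, htn⟩, Equiv.apply_symm_apply _ _⟩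
    have hpi₀ : permToNat π (i₀f : ℕ) = t := by
      rw [permToNat_eq π _ i₀f.2, Fin.eta, hi₀f]
    have hi₀D : D + 1 ≤ (i₀f : ℕ) := by
      by_contra h
      push_neg at h
      rcases lt_or_ge ((i₀f : ℕ)) t with h2 | h2
      · have := low_fix hfil hexc h2
        omega
      · have h3 := (exc_iff_mid hfil hexc (lt_trans (by omega) hD1n)).2 ⟨h2, by omega⟩
        omega
    rcases eq_or_lt_of_le hi₀D with h | h
    · rw [h]; omega
    · have := run_mono hfil h i₀f.2 (Or.inl (by omega))
      omega
  · -- t ≤ permToNat π (D+1)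
    by_contra h
    push_neg at h
    set v := permToNat π (D + 1) with hv
    have hvfix := low_fix hfil hexc h
    have hvn : v < n := by omega
    have h1 : π ⟨v, hvn⟩ = ⟨v, hvn⟩ := by
      have := hvfix
      rw [permToNat_eq π v hvn] at this
      exact Fin.ext this
    have h2 : π ⟨D + 1, hD1n⟩ = ⟨v, hvn⟩ := by
      have : permToNat π (D+1) = v := rfl
      rw [permToNat_eq π (D+1) hD1n] at this
      exact Fin.ext this
    have := π.injective (h2.trans h1.symm)
    simp [Fin.ext_iff] at this
    omega

end Classify2


section Classify3
variable {π : Equiv.Perm (Fin n)} {D k : ℕ}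

lemma exc_eq_fin (π : Equiv.Perm (Fin n)) :
    exc π = (univ.filter fun i : Fin n => i < π i).card := by
  unfold exc
  rw [show (Finset.range n).filter (fun m => m < permToNat π m) =
      (univ.filter fun i : Fin n => i < π i).image Fin.val from ?_]
  · rw [Finset.card_image_of_injective _ Fin.val_injective]
  · ext m
    simp only [Finset.mem_filter, Finset.mem_range, Finset.mem_image, Finset.mem_univ, true_and]
    constructor
    · rintro ⟨hmn, hm⟩
      refine ⟨⟨m, hmn⟩, ?_, rfl⟩
      rw [Fin.lt_def]
      rwa [permToNat_eq π m hmn] at hm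
    · rintro ⟨i, hi, rfl⟩
      refine ⟨i.2, ?_⟩
      rw [permToNat_eq π _ i.2, Fin.eta]
      exact Fin.lt_def.1 hi

lemma fin_exc_iff_pi (hfil : desSet π = {D}) (hexc : exc π = k) (i : Fin n) :
    (i < π i ↔ (D + 1 - k ≤ (i : ℕ) ∧ (i : ℕ) ≤ D)) := by
  have h := exc_iff_mid hfil hexc i.2
  rw [permToNat_eq π _ i.2, Fin.eta] at h
  rw [Fin.lt_def]
  exact h

lemma Vpi_eq (π : Equiv.Perm (Fin n)) :
    (univ.filter fun v => π.symm v < v) = (univ.filter fun i : Fin n => i < π i).image π := by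
  ext v
  simp only [Finset.mem_filter, Finset.mem_univ, true_and, Finset.mem_image]
  constructor
  · intro h
    exact ⟨π.symm v, by rwa [Equiv.apply_symm_apply], Equiv.apply_symm_apply _ _⟩
  · rintro ⟨i, hi, rfl⟩
    rwa [Equiv.symm_apply_apply]

lemma card_Vpi (hexc : exc π = k) :
    (univ.filter fun v => π.symm v < v).card = k := by
  rw [Vpi_eq, Finset.card_image_of_injective _ π.injective, ← exc_eq_fin, hexc]

lemma moved_ge_pi (hfil : desSet π = {D}) (hexc : exc π = k) (u : Fin n)
    (hu : π u ≠ u) : D + 1 - k ≤ (u : ℕ) := by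
  by_contra h
  push_neg at h
  have := low_fix hfil hexc h
  rw [permToNat_eq π _ u.2, Fin.eta] at this
  exact hu (Fin.ext this)

lemma tmoved_pi (hfil : desSet π = {D}) (hexc : exc π = k) (hk : 1 ≤ k) :
    π ⟨D + 1 - k, by have := D_lt hfil; omega⟩ ≠ ⟨D + 1 - k, by have := D_lt hfil; omega⟩ := by
  have hD2 := D_lt hfil
  have hkD := k_le_D hfil hexc
  have h := (fin_exc_iff_pi hfil hexc ⟨D + 1 - k, by omega⟩).2 (by simp only [Fin.val_mk]; omega)
  intro hcon
  rw [hcon] at h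
  exact lt_irrefl _ h

lemma Mpi_eq (hfil : desSet π = {D}) (hexc : exc π = k) (hk : 1 ≤ k) :
    (univ.filter fun v => π v ≠ v ∧ ∀ u, π u ≠ u → v ≤ u) =
      {(⟨D + 1 - k, by have := D_lt hfil; omega⟩ : Fin n)} := by
  ext v
  simp only [Finset.mem_filter, Finset.mem_univ, true_and, Finset.mem_singleton]
  constructor
  · rintro ⟨hmv, hmin⟩
    have h1 : v ≤ ⟨D + 1 - k, by have := D_lt hfil; omega⟩ := hmin _ (tmoved_pi hfil hexc hk)
    have h2 := moved_ge_pi hfil hexc v hmv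
    exact le_antisymm h1 (by rw [Fin.le_def]; exact h2)
  · rintro rfl
    exact ⟨tmoved_pi hfil hexc hk, fun u hu => by
      rw [Fin.le_def]; exact moved_ge_pi hfil hexc u hu⟩

lemma symm_t_eq (hfil : desSet π = {D}) (hexc : exc π = k) (hk : 1 ≤ k) :
    π.symm ⟨D + 1 - k, by have := D_lt hfil; omega⟩ =
      ⟨D + 1, by have := D_lt hfil; omega⟩ := by
  have hD2 := D_lt hfil
  have h := pD1_eq hfil hexc hk
  rw [permToNat_eq π (D+1) (by omega)] at h
  rw [Equiv.symm_apply_eq]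
  exact (Fin.ext h).symm

lemma t_notmem_Vpi (hfil : desSet π = {D}) (hexc : exc π = k) (hk : 1 ≤ k) :
    (⟨D + 1 - k, by have := D_lt hfil; omega⟩ : Fin n) ∉
      (univ.filter fun v => π.symm v < v) := by
  have hD2 := D_lt hfil
  have hkD := k_le_D hfil hexc
  simp only [Finset.mem_filter, Finset.mem_univ, true_and]
  rw [symm_t_eq hfil hexc hk, Fin.lt_def]
  simp only [Fin.val_mk]
  omega

lemma card_Phi (hfil : desSet π = {D}) (hexc : exc π = k) (hk : 1 ≤ k) :
    (Phi π).card = k + 1 := by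
  rw [Phi, Mpi_eq hfil hexc hk,
    Finset.card_union_of_disjoint (Finset.disjoint_singleton_right.2 (t_notmem_Vpi hfil hexc hk)),
    card_Vpi hexc, Finset.card_singleton]

end Classify3


section Classify4
variable {π : Equiv.Perm (Fin n)} {D k : ℕ}

lemma low_fix_fin (hfil : desSet π = {D}) (hexc : exc π = k) {x : Fin n}
    (h : (x : ℕ) < D + 1 - k) : π x = x := by
  have := low_fix hfil hexc h
  rw [permToNat_eq π _ x.2, Fin.eta] at this
  exact Fin.ext this

lemma pi_val_lt (hfil : desSet π = {D}) {a b : ℕ} (ha : a < n) (hb : b < n) (hab : a < b)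
    (hrun : D < a ∨ b ≤ D) : (π ⟨a, ha⟩ : ℕ) < (π ⟨b, hb⟩ : ℕ) := by
  have := run_mono hfil hab hb hrun
  rwa [permToNat_eq π a ha, permToNat_eq π b hb] at this

lemma Phi_nonempty (hfil : desSet π = {D}) (hexc : exc π = k) (hk : 1 ≤ k) :
    (Phi π).Nonempty := by
  refine ⟨⟨D + 1 - k, by have := D_lt hfil; omega⟩, ?_⟩
  rw [Phi, Finset.mem_union, Mpi_eq hfil hexc hk]
  exact Or.inr (Finset.mem_singleton_self _)

lemma min'_Phi (hfil : desSet π = {D}) (hexc : exc π = k) (hk : 1 ≤ k) :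
    (Phi π).min' (Phi_nonempty hfil hexc hk) =
      ⟨D + 1 - k, by have := D_lt hfil; omega⟩ := by
  apply le_antisymm
  · apply Finset.min'_le
    rw [Phi, Finset.mem_union, Mpi_eq hfil hexc hk]
    exact Or.inr (Finset.mem_singleton_self _)
  · apply Finset.le_min'
    intro v hv
    rw [Phi, Finset.mem_union, Mpi_eq hfil hexc hk] at hv
    rcases hv with hv | hv
    · rw [Vpi_eq] at hv
      rw [Finset.mem_image] at hv
      obtain ⟨i, hi, rfl⟩ := hv
      rw [Finset.mem_filter] at hi
      have h1 := (fin_exc_iff_pi hfil hexc i).1 hi.2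
      have h2 := Fin.lt_def.1 hi.2
      rw [Fin.le_def]
      simp only [Fin.val_mk]
      omega
    · rw [Finset.mem_singleton] at hv
      rw [hv]

lemma SofW_Phi (hfil : desSet π = {D}) (hexc : exc π = k) (hk : 1 ≤ k) :
    SofW (Phi π) = (univ.filter fun i : Fin n => (i : ℕ) ≤ D).image π := by
  have hD2 := D_lt hfil
  have hkD := k_le_D hfil hexc
  ext x
  rw [mem_SofW (Phi_nonempty hfil hexc hk), min'_Phi hfil hexc hk]
  simp only [Finset.mem_image, Finset.mem_filter, Finset.mem_univ, true_and]
  constructor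
  · rintro (hx | ⟨hxPhi, hxt⟩)
    · rw [Fin.lt_def] at hx
      simp only [Fin.val_mk] at hx
      exact ⟨x, by omega, low_fix_fin hfil hexc hx⟩
    · have hxV : x ∈ univ.filter fun v => π.symm v < v := by
        rw [Phi, Finset.mem_union, Mpi_eq hfil hexc hk] at hxPhi
        rcases hxPhi with h | h
        · exact h
        · rw [Finset.mem_singleton] at h
          rw [h] at hxt
          exact absurd hxt (lt_irrefl _)
      rw [Vpi_eq, Finset.mem_image] at hxV
      obtain ⟨i, hi, rfl⟩ := hxV
      rw [Finset.mem_filter] at hi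
      exact ⟨i, ((fin_exc_iff_pi hfil hexc i).1 hi.2).2, rfl⟩
  · rintro ⟨i, hiD, rfl⟩
    rcases lt_or_ge (i : ℕ) (D + 1 - k) with h | h
    · left
      rw [low_fix_fin hfil hexc h, Fin.lt_def]
      simpa using h
    · right
      have hexci : i < π i := (fin_exc_iff_pi hfil hexc i).2 ⟨h, hiD⟩
      constructor
      · rw [Phi, Finset.mem_union]
        left
        rw [Vpi_eq, Finset.mem_image]
        exact ⟨i, Finset.mem_filter.2 ⟨Finset.mem_univ _, hexci⟩, rfl⟩
      · rw [Fin.lt_def]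
        have := Fin.lt_def.1 hexci
        simp only [Fin.val_mk]
        omega

lemma card_S0 (hfil : desSet π = {D}) :
    ((univ.filter fun i : Fin n => (i : ℕ) ≤ D).image π).card = D + 1 := by
  have hD2 := D_lt hfil
  rw [Finset.card_image_of_injective _ π.injective]
  rw [show (univ.filter fun i : Fin n => (i : ℕ) ≤ D) = Finset.Iio (⟨D + 1, by omega⟩ : Fin n)
    from by ext y; simp [Finset.mem_Iio, Fin.lt_def, Nat.lt_succ_iff]]
  rw [Fin.card_Iio]

lemma splitPerm_S0 (hfil : desSet π = {D}) :
    splitPerm ((univ.filter fun i : Fin n => (i : ℕ) ≤ D).image π) = π := by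
  have hD2 := D_lt hfil
  set S₀ := (univ.filter fun i : Fin n => (i : ℕ) ≤ D).image π with hS₀
  have hcard : S₀.card = D + 1 := card_S0 hfil
  apply Equiv.ext
  intro i
  by_cases hi : (i : ℕ) < S₀.card
  · rw [splitPerm_apply_lt _ _ hi]
    have hfmono : StrictMono (fun j : Fin (D + 1) => π ⟨(j : ℕ), by omega⟩) := by
      intro a b hab
      rw [Fin.lt_def]
      exact pi_val_lt hfil _ _ (Fin.lt_def.1 hab) (Or.inr (by have := b.2; omega))
    have hfS : ∀ x : Fin (D + 1), (fun j : Fin (D + 1) => π ⟨(j : ℕ), by omega⟩) x ∈ S₀ := by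
      intro x
      exact Finset.mem_image.2 ⟨⟨(x : ℕ), by omega⟩, Finset.mem_filter.2 ⟨Finset.mem_univ _, by
        simp only [Fin.val_mk]; omega⟩, rfl⟩
    have huniq := Finset.orderEmbOfFin_unique hcard hfS hfmono
    have hval : (i : ℕ) < D + 1 := by omega
    calc S₀.orderEmbOfFin rfl ⟨(i : ℕ), hi⟩
        = S₀.orderEmbOfFin hcard ⟨(i : ℕ), hval⟩ :=
          Finset.orderEmbOfFin_eq_orderEmbOfFin_iff.2 (by simp)
      _ = π ⟨(i : ℕ), i.2⟩ := by rw [← huniq]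
      _ = π i := by congr 1
  · rw [splitPerm_apply_ge _ _ hi]
    have hcompl : (S₀ᶜ).card = n - (D + 1) := by
      rw [Finset.card_compl, Fintype.card_fin, hcard]
    have hgmono : StrictMono (fun j : Fin (n - (D + 1)) =>
        π ⟨D + 1 + (j : ℕ), by have := j.2; omega⟩) := by
      intro a b hab
      rw [Fin.lt_def]
      exact pi_val_lt hfil _ _ (by have := Fin.lt_def.1 hab; omega) (Or.inl (by omega))
    have hgS : ∀ x : Fin (n - (D + 1)), (fun j : Fin (n - (D + 1)) =>
        π ⟨D + 1 + (j : ℕ), by have := j.2; omega⟩) x ∈ S₀ᶜ := by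
      intro x
      rw [Finset.mem_compl]
      intro hmem
      obtain ⟨i', hi', heq⟩ := Finset.mem_image.1 hmem
      rw [Finset.mem_filter] at hi'
      have := π.injective heq
      rw [Fin.ext_iff] at this
      simp only [Fin.val_mk] at this
      omega
    have huniq := Finset.orderEmbOfFin_unique hcompl hgS hgmono
    have hin : (i : ℕ) - S₀.card < n - (D + 1) := by have := i.2; omega
    calc (S₀ᶜ).orderEmbOfFin (by rw [Finset.card_compl, Fintype.card_fin])
          ⟨(i : ℕ) - S₀.card, by have h2 := i.2; have h3 := S₀.card_le_univ; simp at h3; omega⟩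
        = (S₀ᶜ).orderEmbOfFin hcompl ⟨(i : ℕ) - S₀.card, by omega⟩ :=
          Finset.orderEmbOfFin_eq_orderEmbOfFin_iff.2 (by simp)
      _ = π ⟨D + 1 + ((i : ℕ) - S₀.card), by have := i.2; omega⟩ := by rw [← huniq]
      _ = π i := by congr 1; exact Fin.ext (by simp only [Fin.val_mk]; omega)

lemma left_inverse_main (hfil : desSet π = {D}) (hexc : exc π = k) (hk : 1 ≤ k) :
    splitPerm (SofW (Phi π)) = π := by
  rw [SofW_Phi hfil hexc hk, splitPerm_S0 hfil]

end Classify4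

end SplitAux


/-- Li: for `1 ≤ k ≤ n - 1`, the number of permutations of `[n]` with exactly one
descent and exactly `k` excedances is `C(n, k+1)`. -/
theorem card_one_descent_k_excedances (n k : ℕ) (hk : 1 ≤ k) (hkn : k ≤ n - 1) :
    (Finset.univ.filter fun π : Equiv.Perm (Fin n) => des π = 1 ∧ exc π = k).card =
      n.choose (k + 1) := by
  classical
  have hps : (Finset.powersetCard (k + 1) (Finset.univ : Finset (Fin n))).card =
      n.choose (k + 1) := by
    rw [Finset.card_powersetCard, Finset.card_univ, Fintype.card_fin]
  rw [← hps]
  refine Finset.card_bij' (fun π _ => SplitAux.Phi π)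
    (fun W _ => SplitAux.splitPerm (SplitAux.SofW W)) ?_ ?_ ?_ ?_
  · intro π hπ
    rw [Finset.mem_filter] at hπ
    obtain ⟨-, hdes, hexc⟩ := hπ
    obtain ⟨DD, hfil⟩ := Finset.card_eq_one.1 (hdes : (SplitAux.desSet π).card = 1)
    exact Finset.mem_powersetCard_univ.2 (SplitAux.card_Phi hfil hexc hk)
  · intro W hW
    have hcard : W.card = k + 1 := Finset.mem_powersetCard_univ.1 hW
    have hWne : W.Nonempty := Finset.card_pos.1 (by omega)
    exact Finset.mem_filter.2 ⟨Finset.mem_univ _,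
      SplitAux.des_splitPerm_SofW hWne hcard hk,
      SplitAux.exc_splitPerm_SofW hWne hcard hk⟩
  · intro π hπ
    rw [Finset.mem_filter] at hπ
    obtain ⟨-, hdes, hexc⟩ := hπ
    obtain ⟨DD, hfil⟩ := Finset.card_eq_one.1 (hdes : (SplitAux.desSet π).card = 1)
    exact SplitAux.left_inverse_main hfil hexc hk
  · intro W hW
    have hcard : W.card = k + 1 := Finset.mem_powersetCard_univ.1 hW
    have hWne : W.Nonempty := Finset.card_pos.1 (by omega)
    exact SplitAux.Phi_splitPerm_SofW hWne hcard hk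
end
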